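/- arXiv:1809.01422 — 7 statements merged into one kernel-verified Lean document; each statement's English description precedes it below -/
import Mathlib

section
/- For any T > 0, any positive integer n, and any integers l₁ ≤ l₂ with −(n−1) ≤ l₁ and l₂ ≤ n−1, one has Σ_{l=l₁}^{l₂} |γ_l| ≤ ∫_{t_{l₁−1}}^{t_{l₂+1}} |R(τ)| dτ. -/
open MeasureTheory Filter Finset Real

/-- `γ_l = (n/T) ∫_{t_0}^{t_1} ∫_{t_l}^{t_{l+1}} R(v-u) dv du`, where `t_i = i T / n`. -/
noncomputable def gam (R : ℝ → ℝ) (T : ℝ) (n : ℕ) (l : ℤ) : ℝ :=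
  ((n : ℝ) / T) *
    ∫ u in (0:ℝ)..(T / n), ∫ v in ((l : ℝ) * T / n)..(((l : ℝ) + 1) * T / n), R (v - u)

private lemma tele_sum (f : ℝ → ℝ)
    (hf : ∀ a b : ℝ, IntervalIntegrable f MeasureTheory.volume a b)
    (g : ℤ → ℝ) (l₁ l₂ : ℤ) (h : l₁ ≤ l₂) :
    ∑ l ∈ Finset.Icc l₁ l₂, ∫ τ in g l..g (l+1), f τ
      = ∫ τ in g l₁..g (l₂+1), f τ := by
  refine Int.le_induction (motive := fun k _ => ∑ l ∈ Finset.Icc l₁ k, ∫ τ in g l..g (l+1), f τ = ∫ τ in g l₁..g (k+1), f τ) ?_ ?_ l₂ h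
  · simp
  · intro m hm ih
    have hins : Finset.Icc l₁ (m+1) = insert (m+1) (Finset.Icc l₁ m) := by
      ext x; simp [Finset.mem_Icc]; omega
    have hnot : (m+1) ∉ Finset.Icc l₁ m := by simp [Finset.mem_Icc]
    rw [hins, Finset.sum_insert hnot, ih, add_comm]
    exact intervalIntegral.integral_add_adjacent_intervals (hf _ _) (hf _ _)

theorem stmt_0 (R : ℝ → ℝ) (hEven : ∀ τ, R (-τ) = R τ) (hCont : Continuous R)
    (hBdd : ∃ M, ∀ τ, |R τ| ≤ M) (hInt : Integrable R)
    (T : ℝ) (hT : 0 < T) (n : ℕ) (hn : 0 < n)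
    (l₁ l₂ : ℤ) (hl : l₁ ≤ l₂) (hl₁ : -((n : ℤ) - 1) ≤ l₁) (hl₂ : l₂ ≤ (n : ℤ) - 1) :
    ∑ l ∈ Finset.Icc l₁ l₂, |gam R T n l| ≤
      ∫ τ in (((l₁ : ℝ) - 1) * T / n)..(((l₂ : ℝ) + 1) * T / n), |R τ| := by
  have hn' : (0:ℝ) < n := by exact_mod_cast hn
  set δ : ℝ := T / n with hδdef
  have hδ : 0 < δ := by positivity
  have hRI : ∀ a b : ℝ, IntervalIntegrable R MeasureTheory.volume a b :=
    fun a b => hCont.intervalIntegrable a b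
  have habsI : ∀ a b : ℝ, IntervalIntegrable (fun τ => |R τ|) MeasureTheory.volume a b :=
    fun a b => hCont.abs.intervalIntegrable a b
  -- primitive of R
  set F : ℝ → ℝ := fun x => ∫ t in (0:ℝ)..x, R t with hFdef
  have hFcont : Continuous F := intervalIntegral.continuous_primitive hRI 0
  have hFsub : ∀ a b : ℝ, (∫ τ in a..b, R τ) = F b - F a := by
    intro a b
    rw [hFdef]
    exact (intervalIntegral.integral_interval_sub_left (hRI 0 b) (hRI 0 a)).symm
  -- inner integral as a function of u
  set f : ℤ → ℝ → ℝ := fun l u => ∫ v in ((l:ℝ) * δ)..(((l:ℝ)+1) * δ), R (v - u) with hfdef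
  have hfeq : ∀ (l : ℤ) (u : ℝ), f l u = ∫ τ in ((l:ℝ) * δ - u)..(((l:ℝ)+1) * δ - u), R τ := by
    intro l u
    exact intervalIntegral.integral_comp_sub_right _ u
  have hfcont : ∀ l : ℤ, Continuous (f l) := by
    intro l
    have : f l = fun u => F (((l:ℝ)+1) * δ - u) - F ((l:ℝ) * δ - u) := by
      funext u; rw [hfeq, hFsub]
    rw [this]
    fun_prop
  -- the constant bound
  have hlR : (l₁:ℝ) ≤ (l₂:ℝ) := by exact_mod_cast hl
  set C : ℝ := ∫ τ in (((l₁:ℝ) - 1) * δ)..(((l₂:ℝ) + 1) * δ), |R τ| with hCdef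
  -- pointwise bound on the sum of |f l u| for u ∈ [0, δ]
  have key : ∀ u ∈ Set.Icc (0:ℝ) δ, ∑ l ∈ Finset.Icc l₁ l₂, |f l u| ≤ C := by
    intro u hu
    obtain ⟨hu0, huδ⟩ := hu
    have step1 : ∀ l ∈ Finset.Icc l₁ l₂,
        |f l u| ≤ ∫ τ in ((l:ℝ) * δ - u)..(((l:ℝ)+1) * δ - u), |R τ| := by
      intro l _
      rw [hfeq]
      exact intervalIntegral.abs_integral_le_integral_abs
        (by nlinarith [hδ.le])
    have step2 : ∑ l ∈ Finset.Icc l₁ l₂,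
        (∫ τ in ((l:ℝ) * δ - u)..(((l:ℝ)+1) * δ - u), |R τ|)
        = ∫ τ in ((l₁:ℝ) * δ - u)..(((l₂:ℝ)+1) * δ - u), |R τ| := by
      have := tele_sum (fun τ => |R τ|) habsI (fun l => (l:ℝ) * δ - u) l₁ l₂ hl
      simpa using this
    have step3 : (∫ τ in ((l₁:ℝ) * δ - u)..(((l₂:ℝ)+1) * δ - u), |R τ|) ≤ C := by
      apply intervalIntegral.integral_mono_interval (by nlinarith [hδ.le]) (by nlinarith [hδ.le]) (by nlinarith [hδ.le])
      · exact Filter.Eventually.of_forall fun τ => abs_nonneg _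
      · exact habsI _ _
    calc ∑ l ∈ Finset.Icc l₁ l₂, |f l u|
        ≤ ∑ l ∈ Finset.Icc l₁ l₂,
            ∫ τ in ((l:ℝ) * δ - u)..(((l:ℝ)+1) * δ - u), |R τ| := Finset.sum_le_sum step1
      _ = _ := step2
      _ ≤ C := step3
  -- |gam| bound per l
  have hCnonneg : 0 ≤ C := by
    apply intervalIntegral.integral_nonneg (by nlinarith [hδ.le, hlR])
    · intro x _; exact abs_nonneg _
  have hgam : ∀ l : ℤ, |gam R T n l| ≤ ((n:ℝ)/T) * ∫ u in (0:ℝ)..δ, |f l u| := by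
    intro l
    have h1 : gam R T n l = ((n:ℝ)/T) * ∫ u in (0:ℝ)..δ, f l u := by
      simp only [gam, hfdef, hδdef, mul_div_assoc]
    rw [h1, abs_mul, abs_of_nonneg (by positivity : (0:ℝ) ≤ (n:ℝ)/T)]
    gcongr
    exact intervalIntegral.abs_integral_le_integral_abs hδ.le
  calc ∑ l ∈ Finset.Icc l₁ l₂, |gam R T n l|
      ≤ ∑ l ∈ Finset.Icc l₁ l₂, ((n:ℝ)/T) * ∫ u in (0:ℝ)..δ, |f l u| :=
        Finset.sum_le_sum fun l _ => hgam l
    _ = ((n:ℝ)/T) * ∑ l ∈ Finset.Icc l₁ l₂, ∫ u in (0:ℝ)..δ, |f l u| := by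
        rw [Finset.mul_sum]
    _ = ((n:ℝ)/T) * ∫ u in (0:ℝ)..δ, ∑ l ∈ Finset.Icc l₁ l₂, |f l u| := by
        rw [intervalIntegral.integral_finset_sum]
        intro l _
        exact ((hfcont l).abs).intervalIntegrable _ _
    _ ≤ ((n:ℝ)/T) * ∫ u in (0:ℝ)..δ, C := by
        gcongr
        apply intervalIntegral.integral_mono_on hδ.le _ (intervalIntegrable_const)
        · exact key
        · exact (continuous_finset_sum _ fun l _ => (hfcont l).abs).intervalIntegrable _ _
    _ = ((n:ℝ)/T) * (δ * C) := by rw [intervalIntegral.integral_const, smul_eq_mul, sub_zero]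
    _ = C := by rw [hδdef]; field_simp
    _ = _ := by rw [hCdef]; congr 1 <;> rw [hδdef] <;> ring
end

section
/- For any T > 0, any positive integer n, and any θ ∈ ℝ, the trigonometric polynomial g_{T,n}(θ) = Σ_{l=−(n−1)}^{n−1} γ_l e^{ilθ} satisfies |g_{T,n}(θ)| ≤ ∫_ℝ |R(τ)| dτ. -/
open MeasureTheory Filter Finset Real

/-- Telescoping sum over an integer interval. -/
lemma tele_int (F : ℤ → ℝ) (a : ℤ) : ∀ b : ℤ, a - 1 ≤ b →
    ∑ l ∈ Finset.Icc a b, (F (l + 1) - F l) = F (b + 1) - F a := by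
  refine Int.le_induction ?_ ?_
  · rw [show a - 1 + 1 = a by ring]; simp [Finset.Icc_self]
  · intro b hb ih
    have hins : Finset.Icc a (b + 1) = insert (b + 1) (Finset.Icc a b) := by
      ext x; simp only [Finset.mem_Icc, Finset.mem_insert]; omega
    rw [hins, Finset.sum_insert (by simp only [Finset.mem_Icc]; omega), ih]
    ring

theorem stmt_2 (R : ℝ → ℝ) (hEven : ∀ τ, R (-τ) = R τ) (hCont : Continuous R)
    (hBdd : ∃ M, ∀ τ, |R τ| ≤ M) (hInt : Integrable R)
    (T : ℝ) (hT : 0 < T) (n : ℕ) (hn : 0 < n) (θ : ℝ) :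
    ‖∑ l ∈ Finset.Icc (-((n : ℤ) - 1)) ((n : ℤ) - 1),
        (gam R T n l : ℂ) * Complex.exp (Complex.I * l * θ)‖ ≤ ∫ τ, |R τ| := by
  have hnR : (0:ℝ) < (n:ℝ) := by exact_mod_cast hn
  set c : ℝ := T / n with hc
  have hcpos : 0 < c := div_pos hT hnR
  -- primitives
  set G : ℝ → ℝ := fun x => ∫ t in (0:ℝ)..x, |R t| with hG
  set P : ℝ → ℝ := fun x => ∫ t in (0:ℝ)..x, R t with hP
  have hRabsCont : Continuous fun t => |R t| := hCont.abs
  have hGcont : Continuous G :=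
    intervalIntegral.continuous_primitive (fun a b => hRabsCont.intervalIntegrable a b) 0
  have hPcont : Continuous P :=
    intervalIntegral.continuous_primitive (fun a b => hCont.intervalIntegrable a b) 0
  have hdiv : ∀ x : ℝ, x * T / (n:ℝ) = x * c := fun x => mul_div_assoc x T n
  -- inner integrals as primitive differences
  have keyR : ∀ (r s u : ℝ), (∫ v in (r : ℝ)..s, R (v - u)) = P (s - u) - P (r - u) := by
    intro r s u
    rw [intervalIntegral.integral_comp_sub_right R u,
      ← intervalIntegral.integral_interval_sub_left
        (hCont.intervalIntegrable 0 (s - u)) (hCont.intervalIntegrable 0 (r - u))]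
  have keyA : ∀ (r s u : ℝ), (∫ v in (r : ℝ)..s, |R (v - u)|) = G (s - u) - G (r - u) := by
    intro r s u
    rw [intervalIntegral.integral_comp_sub_right (fun v => |R v|) u,
      ← intervalIntegral.integral_interval_sub_left
        (hRabsCont.intervalIntegrable 0 (s - u)) (hRabsCont.intervalIntegrable 0 (r - u))]
  have hGshift : ∀ r : ℝ, Continuous fun u : ℝ => G (r - u) := fun r =>
    hGcont.comp (by fun_prop)
  have hPshift : ∀ r : ℝ, Continuous fun u : ℝ => P (r - u) := fun r =>
    hPcont.comp (by fun_prop)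
  -- B
  set B : ℤ → ℝ := fun l => ∫ u in (0:ℝ)..c, G ((l : ℝ) * c - u) with hB
  have hBsucc : ∀ l : ℤ, B (l + 1) = ∫ u in (0:ℝ)..c, G (((l : ℝ) + 1) * c - u) := by
    intro l; simp only [hB, Int.cast_add, Int.cast_one]
  -- per-l bound
  have hperl : ∀ l : ℤ, |gam R T n l| ≤ ((n : ℝ) / T) * (B (l + 1) - B l) := by
    intro l
    have hnT : (0:ℝ) ≤ (n : ℝ) / T := le_of_lt (div_pos hnR hT)
    rw [gam, abs_mul, abs_of_nonneg hnT]
    apply mul_le_mul_of_nonneg_left _ hnT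
    rw [hdiv, hdiv, show T / (n:ℝ) = c from rfl]
    calc |∫ u in (0:ℝ)..c, ∫ v in ((l : ℝ) * c)..(((l : ℝ) + 1) * c), R (v - u)|
        ≤ ∫ u in (0:ℝ)..c, |∫ v in ((l : ℝ) * c)..(((l : ℝ) + 1) * c), R (v - u)| :=
          intervalIntegral.abs_integral_le_integral_abs (le_of_lt hcpos)
      _ ≤ ∫ u in (0:ℝ)..c, (∫ v in ((l : ℝ) * c)..(((l : ℝ) + 1) * c), |R (v - u)|) := by
          apply intervalIntegral.integral_mono_on (le_of_lt hcpos)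
          · have h2 : Continuous fun u : ℝ => ∫ v in ((l : ℝ) * c)..(((l : ℝ) + 1) * c), R (v - u) := by
              have h1 : (fun u : ℝ => ∫ v in ((l : ℝ) * c)..(((l : ℝ) + 1) * c), R (v - u))
                  = fun u : ℝ => P (((l : ℝ) + 1) * c - u) - P ((l : ℝ) * c - u) :=
                funext fun u => keyR _ _ u
              rw [h1]; exact (hPshift _).sub (hPshift _)
            exact h2.abs.intervalIntegrable 0 c
          · have h2 : Continuous fun u : ℝ => ∫ v in ((l : ℝ) * c)..(((l : ℝ) + 1) * c), |R (v - u)| := by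
              have h1 : (fun u : ℝ => ∫ v in ((l : ℝ) * c)..(((l : ℝ) + 1) * c), |R (v - u)|)
                  = fun u : ℝ => G (((l : ℝ) + 1) * c - u) - G ((l : ℝ) * c - u) :=
                funext fun u => keyA _ _ u
              rw [h1]; exact (hGshift _).sub (hGshift _)
            exact h2.intervalIntegrable 0 c
          · intro u _
            exact intervalIntegral.abs_integral_le_integral_abs
              (by nlinarith : (l : ℝ) * c ≤ ((l : ℝ) + 1) * c)
      _ = B (l + 1) - B l := by
          rw [hBsucc]; simp only [hB]
          rw [← intervalIntegral.integral_sub (((hGshift _).intervalIntegrable 0 c))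
              (((hGshift _).intervalIntegrable 0 c))]
          exact intervalIntegral.integral_congr fun u _ => keyA _ _ u
  -- step 1: abs of sum ≤ sum of |gam|
  have hC : ∀ τ : ℝ, Integrable (fun t => |R t|) := fun _ => hInt.abs
  have step1 : ‖∑ l ∈ Finset.Icc (-((n : ℤ) - 1)) ((n : ℤ) - 1),
        (gam R T n l : ℂ) * Complex.exp (Complex.I * l * θ)‖
      ≤ ∑ l ∈ Finset.Icc (-((n : ℤ) - 1)) ((n : ℤ) - 1), |gam R T n l| := by
    refine (norm_sum_le _ _).trans_eq (Finset.sum_congr rfl fun l _ => ?_)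
    rw [norm_mul]
    have : Complex.I * (l : ℂ) * (θ : ℂ) = ((l * θ : ℝ) : ℂ) * Complex.I := by
      push_cast; ring
    rw [this]
    simp only [Complex.norm_exp_ofReal_mul_I, mul_one, Complex.norm_real, Real.norm_eq_abs]
  refine step1.trans ?_
  -- step 2: sum of bounds
  have step2 : ∑ l ∈ Finset.Icc (-((n : ℤ) - 1)) ((n : ℤ) - 1), |gam R T n l|
      ≤ ((n : ℝ) / T) * (B ((n : ℤ) - 1 + 1) - B (-((n : ℤ) - 1))) := by
    calc ∑ l ∈ Finset.Icc (-((n : ℤ) - 1)) ((n : ℤ) - 1), |gam R T n l|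
        ≤ ∑ l ∈ Finset.Icc (-((n : ℤ) - 1)) ((n : ℤ) - 1), ((n : ℝ) / T) * (B (l + 1) - B l) :=
          Finset.sum_le_sum fun l _ => hperl l
      _ = ((n : ℝ) / T) * ∑ l ∈ Finset.Icc (-((n : ℤ) - 1)) ((n : ℤ) - 1), (B (l + 1) - B l) := by
          rw [Finset.mul_sum]
      _ = _ := by
          rw [tele_int B (-((n : ℤ) - 1)) ((n : ℤ) - 1) (by omega)]
  refine step2.trans ?_
  -- step 3: final bound
  have hBdiff : B ((n : ℤ) - 1 + 1) - B (-((n : ℤ) - 1))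
      = ∫ u in (0:ℝ)..c, (G ((((n : ℤ) - 1 + 1 : ℤ) : ℝ) * c - u) - G (((-((n : ℤ) - 1) : ℤ) : ℝ) * c - u)) := by
    simp only [hB]
    rw [← intervalIntegral.integral_sub ((hGshift _).intervalIntegrable 0 c)
        ((hGshift _).intervalIntegrable 0 c)]
  rw [hBdiff]
  have hptwise : ∀ u ∈ Set.Icc (0:ℝ) c,
      G ((((n : ℤ) - 1 + 1 : ℤ) : ℝ) * c - u) - G (((-((n : ℤ) - 1) : ℤ) : ℝ) * c - u) ≤ ∫ τ, |R τ| := by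
    intro u _
    set a := ((-((n : ℤ) - 1) : ℤ) : ℝ) * c - u
    set b := (((n : ℤ) - 1 + 1 : ℤ) : ℝ) * c - u
    have hab : a ≤ b := by
      have h1 : ((-((n : ℤ) - 1) : ℤ) : ℝ) ≤ (((n : ℤ) - 1 + 1 : ℤ) : ℝ) := by
        push_cast
        have h2 : (1:ℝ) ≤ (n:ℝ) := by exact_mod_cast hn
        linarith
      simp only [a, b]; nlinarith
    rw [show G b - G a = ∫ t in a..b, |R t| from intervalIntegral.integral_interval_sub_left
        (hRabsCont.intervalIntegrable 0 b) (hRabsCont.intervalIntegrable 0 a)]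
    rw [intervalIntegral.integral_of_le hab]
    apply setIntegral_le_integral hInt.abs
    filter_upwards with t using abs_nonneg _
  calc ((n : ℝ) / T) * (∫ u in (0:ℝ)..c, (G ((((n : ℤ) - 1 + 1 : ℤ) : ℝ) * c - u) - G (((-((n : ℤ) - 1) : ℤ) : ℝ) * c - u)))
      ≤ ((n : ℝ) / T) * (∫ u in (0:ℝ)..c, (∫ τ, |R τ|)) := by
        apply mul_le_mul_of_nonneg_left _ (le_of_lt (div_pos hnR hT))
        apply intervalIntegral.integral_mono_on (le_of_lt hcpos)
        · exact ((hGshift _).sub (hGshift _)).intervalIntegrable 0 c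
        · exact intervalIntegrable_const
        · exact hptwise
    _ = (∫ τ, |R τ|) := by
        rw [intervalIntegral.integral_const, smul_eq_mul, hc]
        have hne : (n:ℝ) ≠ 0 := ne_of_gt hnR
        field_simp
        ring
end

section
/- For any T > 0 and any positive integer n, the operator norm of the Toeplitz matrix A_{T,n} satisfies ‖A_{T,n}‖₂ ≤ ∫_ℝ |R(τ)| dτ; in particular ‖A_{T,n}‖₂ is bounded uniformly over all T > 0 and n ∈ ℕ. -/
open MeasureTheory Filter Finset Real

/-- The `n × n` Toeplitz matrix `A_{T,n}` with `(i,j)`-entry `γ_{j-i}`. -/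
noncomputable def AMat (R : ℝ → ℝ) (T : ℝ) (n : ℕ) : Matrix (Fin n) (Fin n) ℝ :=
  fun i j => gam R T n ((j : ℤ) - (i : ℤ))

lemma schur_bound {n : ℕ} (A : Matrix (Fin n) (Fin n) ℝ) (C : ℝ) (hC : 0 ≤ C)
    (hrow : ∀ i, ∑ j, |A i j| ≤ C) (hcol : ∀ j, ∑ i, |A i j| ≤ C) :
    ‖Matrix.toEuclideanCLM (𝕜 := ℝ) A‖ ≤ C := by
  refine ContinuousLinearMap.opNorm_le_bound _ hC fun x => ?_
  have hAx : ∀ i, (Matrix.toEuclideanCLM (𝕜 := ℝ) A) x i = ∑ j, A i j * x j := by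
    intro i
    have h := congrFun (Matrix.ofLp_toEuclideanCLM (𝕜 := ℝ) A x) i
    simpa [Matrix.toLin'_apply, Matrix.mulVec, dotProduct] using h
  have key : ∑ i, (∑ j, A i j * x j) ^ 2 ≤ C ^ 2 * ∑ j, (x j) ^ 2 := by
    have step1 : ∀ i, (∑ j, A i j * x j) ^ 2 ≤ C * ∑ j, |A i j| * (x j) ^ 2 := by
      intro i
      have h1 : (∑ j, A i j * x j) ^ 2 ≤ (∑ j, |A i j * x j|) ^ 2 := by
        calc (∑ j, A i j * x j) ^ 2 = |∑ j, A i j * x j| ^ 2 := (sq_abs _).symm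
          _ ≤ (∑ j, |A i j * x j|) ^ 2 :=
            pow_le_pow_left₀ (abs_nonneg _) (Finset.abs_sum_le_sum_abs _ _) 2
      have h2 : (∑ j, |A i j * x j|) ^ 2 ≤ (∑ j, |A i j|) * (∑ j, |A i j| * (x j) ^ 2) := by
        have hcs := Finset.sum_mul_sq_le_sq_mul_sq Finset.univ
          (fun j => Real.sqrt |A i j|) (fun j => Real.sqrt |A i j| * |x j|)
        have e1 : ∀ j, Real.sqrt |A i j| * (Real.sqrt |A i j| * |x j|) = |A i j * x j| := by
          intro j; rw [← mul_assoc, Real.mul_self_sqrt (abs_nonneg _), abs_mul]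
        have e2 : ∀ j, (Real.sqrt |A i j|) ^ 2 = |A i j| := fun j => Real.sq_sqrt (abs_nonneg _)
        have e3 : ∀ j, (Real.sqrt |A i j| * |x j|) ^ 2 = |A i j| * (x j) ^ 2 := by
          intro j; rw [mul_pow, Real.sq_sqrt (abs_nonneg _), sq_abs]
        simpa only [e1, e2, e3] using hcs
      refine (h1.trans h2).trans ?_
      exact mul_le_mul_of_nonneg_right (hrow i)
        (sum_nonneg fun j _ => mul_nonneg (abs_nonneg _) (sq_nonneg _))
    calc ∑ i, (∑ j, A i j * x j) ^ 2 ≤ ∑ i, C * ∑ j, |A i j| * (x j) ^ 2 :=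
          sum_le_sum fun i _ => step1 i
      _ = C * ∑ j, (∑ i, |A i j|) * (x j) ^ 2 := by
          rw [← mul_sum, Finset.sum_comm]
          simp_rw [← Finset.sum_mul]
      _ ≤ C * ∑ j, C * (x j) ^ 2 := by
          refine mul_le_mul_of_nonneg_left ?_ hC
          exact sum_le_sum fun j _ => mul_le_mul_of_nonneg_right (hcol j) (sq_nonneg _)
      _ = C ^ 2 * ∑ j, (x j) ^ 2 := by rw [← mul_sum]; ring
  rw [EuclideanSpace.norm_eq, EuclideanSpace.norm_eq]
  simp_rw [Real.norm_eq_abs, sq_abs, hAx]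
  calc √(∑ i, (∑ j, A i j * x j) ^ 2) ≤ √(C ^ 2 * ∑ j, (x j) ^ 2) := Real.sqrt_le_sqrt key
    _ = C * √(∑ j, (x j) ^ 2) := by rw [Real.sqrt_mul (sq_nonneg C), Real.sqrt_sq hC]

lemma gam_sum_bound (R : ℝ → ℝ) (hCont : Continuous R) (hInt : Integrable R)
    (T : ℝ) (hT : 0 < T) (n : ℕ) (hn : 0 < n) (c : ℤ) :
    ∑ k ∈ Finset.range n, |gam R T n (c + k)| ≤ ∫ τ, |R τ| := by
  set C : ℝ := ∫ τ, |R τ| with hCdef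
  have hgabs : Integrable (fun τ => |R τ|) := hInt.abs
  have hδ : (0:ℝ) < T / n := div_pos hT (Nat.cast_pos.2 hn)
  set a : ℕ → ℝ := fun k => ((c:ℝ) + k) * T / n with ha
  -- L1 : interval integral of |R| is at most C
  have L1 : ∀ x y : ℝ, x ≤ y → (∫ t in x..y, |R t|) ≤ C := by
    intro x y hxy
    rw [intervalIntegral.integral_of_le hxy]
    exact setIntegral_le_integral hgabs (Eventually.of_forall fun t => abs_nonneg _)
  -- primitive of |R| is continuous
  have hQ : Continuous (fun x => ∫ t in (0:ℝ)..x, |R t|) := hgabs.continuous_primitive 0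
  -- ψ k u = ∫ v in a k..a (k+1), |R (v-u)|
  set ψ : ℕ → ℝ → ℝ := fun k u => ∫ v in a k..a (k+1), |R (v - u)| with hψ
  have hψeq : ∀ k u, ψ k u =
      (∫ t in (0:ℝ)..(a (k+1) - u), |R t|) - ∫ t in (0:ℝ)..(a k - u), |R t| := by
    intro k u
    rw [hψ]
    simp only
    rw [intervalIntegral.integral_comp_sub_right (fun t => |R t|) u]
    exact (intervalIntegral.integral_interval_sub_left
      hgabs.intervalIntegrable hgabs.intervalIntegrable).symm
  have hψcont : ∀ k, Continuous (ψ k) := by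
    intro k
    have : ψ k = fun u => (∫ t in (0:ℝ)..(a (k+1) - u), |R t|)
        - ∫ t in (0:ℝ)..(a k - u), |R t| := funext (hψeq k)
    rw [this]
    exact ((hQ.comp (continuous_const.sub continuous_id)).sub
      (hQ.comp (continuous_const.sub continuous_id)))
  -- each |gam (c+k)| is bounded by (n/T) * ∫_0^{T/n} ψ k u du
  have hbound : ∀ k : ℕ, |gam R T n (c + k)| ≤ ((n:ℝ)/T) * ∫ u in (0:ℝ)..(T/n), ψ k u := by
    intro k
    have ha1 : ((c + k : ℤ) : ℝ) * T / n = a k := by rw [ha]; push_cast; ring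
    have ha2 : (((c + k : ℤ) : ℝ) + 1) * T / n = a (k+1) := by rw [ha]; push_cast; ring
    have hg : gam R T n (c + k)
        = ((n:ℝ)/T) * ∫ u in (0:ℝ)..(T/n), ∫ v in a k..a (k+1), R (v - u) := by
      rw [gam, ha1, ha2]
    rw [hg, abs_mul, abs_of_nonneg (by positivity : (0:ℝ) ≤ (n:ℝ)/T)]
    refine mul_le_mul_of_nonneg_left ?_ (by positivity)
    have hak : a k ≤ a (k+1) := by
      rw [ha]; simp only
      have : ((c:ℝ) + k) ≤ ((c:ℝ) + (k+1:ℕ)) := by push_cast; linarith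
      exact div_le_div_of_nonneg_right
        (mul_le_mul_of_nonneg_right this hT.le) (Nat.cast_nonneg n)
    calc |∫ u in (0:ℝ)..(T/n), ∫ v in a k..a (k+1), R (v - u)|
        ≤ ∫ u in (0:ℝ)..(T/n), |∫ v in a k..a (k+1), R (v - u)| :=
          intervalIntegral.abs_integral_le_integral_abs hδ.le
      _ ≤ ∫ u in (0:ℝ)..(T/n), ψ k u := by
          apply intervalIntegral.integral_mono_on hδ.le
          · -- |inner integral| is continuous in u
            have hφ : Continuous (fun u => ∫ v in a k..a (k+1), R (v - u)) := by
              have hP : Continuous (fun x => ∫ t in (0:ℝ)..x, R t) :=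
                hInt.continuous_primitive 0
              have : (fun u => ∫ v in a k..a (k+1), R (v - u))
                  = fun u => (∫ t in (0:ℝ)..(a (k+1) - u), R t)
                      - ∫ t in (0:ℝ)..(a k - u), R t := by
                funext u
                rw [intervalIntegral.integral_comp_sub_right R u]
                exact (intervalIntegral.integral_interval_sub_left
                  hInt.intervalIntegrable hInt.intervalIntegrable).symm
              rw [this]
              exact (hP.comp (continuous_const.sub continuous_id)).sub
                (hP.comp (continuous_const.sub continuous_id))
            exact hφ.abs.intervalIntegrable _ _
          · exact (hψcont k).intervalIntegrable _ _
          · intro u _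
            exact intervalIntegral.abs_integral_le_integral_abs hak
  -- sum up
  have hsum : ∑ k ∈ Finset.range n, |gam R T n (c + k)|
      ≤ ((n:ℝ)/T) * ∫ u in (0:ℝ)..(T/n), ∑ k ∈ Finset.range n, ψ k u := by
    calc ∑ k ∈ Finset.range n, |gam R T n (c + k)|
        ≤ ∑ k ∈ Finset.range n, ((n:ℝ)/T) * ∫ u in (0:ℝ)..(T/n), ψ k u :=
          Finset.sum_le_sum fun k _ => hbound k
      _ = ((n:ℝ)/T) * ∑ k ∈ Finset.range n, ∫ u in (0:ℝ)..(T/n), ψ k u := by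
          rw [Finset.mul_sum]
      _ = _ := by
          congr 1
          exact (intervalIntegral.integral_finset_sum
            (fun k _ => (hψcont k).intervalIntegrable _ _)).symm
  refine hsum.trans ?_
  -- pointwise bound of the sum by C
  have hptwise : ∀ u : ℝ, ∑ k ∈ Finset.range n, ψ k u ≤ C := by
    intro u
    have htel : ∑ k ∈ Finset.range n, ψ k u = ∫ v in (a 0)..(a n), |R (v - u)| :=
      intervalIntegral.sum_integral_adjacent_intervals
        (fun k _ => ((hCont.abs).comp (continuous_id.sub continuous_const)).intervalIntegrable _ _)
    rw [htel, intervalIntegral.integral_comp_sub_right (fun t => |R t|) u]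
    apply L1
    have : a 0 ≤ a n := by
      rw [ha]; simp only
      refine div_le_div_of_nonneg_right
        (mul_le_mul_of_nonneg_right ?_ hT.le) (Nat.cast_nonneg n)
      simp
    linarith
  have hfinal : (∫ u in (0:ℝ)..(T/n), ∑ k ∈ Finset.range n, ψ k u) ≤ (T/n) * C := by
    have hCint : (∫ u in (0:ℝ)..(T/n), C) = (T/n) * C := by
      rw [intervalIntegral.integral_const, smul_eq_mul, sub_zero]
    rw [← hCint]
    have hsint : IntervalIntegrable (fun u => ∑ k ∈ Finset.range n, ψ k u) volume 0 (T/n) :=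
      ((continuous_finset_sum (Finset.range n) fun k _ => hψcont k).intervalIntegrable _ _)
    exact intervalIntegral.integral_mono_on hδ.le hsint intervalIntegrable_const
      (fun u _ => hptwise u)
  calc ((n:ℝ)/T) * ∫ u in (0:ℝ)..(T/n), ∑ k ∈ Finset.range n, ψ k u
      ≤ ((n:ℝ)/T) * ((T/n) * C) := mul_le_mul_of_nonneg_left hfinal (by positivity)
    _ = C := by field_simp

theorem stmt_3 (R : ℝ → ℝ) (hEven : ∀ τ, R (-τ) = R τ) (hCont : Continuous R)
    (hBdd : ∃ M, ∀ τ, |R τ| ≤ M) (hInt : Integrable R)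
    (T : ℝ) (hT : 0 < T) (n : ℕ) (hn : 0 < n) :
    ‖Matrix.toEuclideanCLM (𝕜 := ℝ) (AMat R T n)‖ ≤ ∫ τ, |R τ| := by
  have hC : (0:ℝ) ≤ ∫ τ, |R τ| := integral_nonneg fun τ => abs_nonneg _
  apply schur_bound _ _ hC
  · -- row sums
    intro i
    have : ∑ j : Fin n, |AMat R T n i j|
        = ∑ k ∈ Finset.range n, |gam R T n (-(i:ℤ) + k)| := by
      rw [← Fin.sum_univ_eq_sum_range (fun k => |gam R T n (-(i:ℤ) + k)|) n]
      refine Finset.sum_congr rfl fun j _ => ?_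
      simp [AMat, sub_eq_neg_add]
    rw [this]
    exact gam_sum_bound R hCont hInt T hT n hn _
  · -- column sums
    intro j
    have h1 : ∑ i : Fin n, |AMat R T n i j|
        = ∑ k ∈ Finset.range n, |gam R T n ((j:ℤ) - k)| := by
      rw [← Fin.sum_univ_eq_sum_range (fun k => |gam R T n ((j:ℤ) - k)|) n]
      rfl
    have h2 : ∑ k ∈ Finset.range n, |gam R T n ((j:ℤ) - k)|
        = ∑ k ∈ Finset.range n, |gam R T n (((j:ℤ) - n + 1) + k)| := by
      rw [← Finset.sum_range_reflect (fun k => |gam R T n ((j:ℤ) - k)|) n]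
      refine Finset.sum_congr rfl fun k hk => ?_
      have hk' := Finset.mem_range.1 hk
      have harg : (j:ℤ) - ((n - 1 - k : ℕ) : ℤ) = ((j:ℤ) - n + 1) + k := by omega
      rw [harg]
    rw [h1, h2]
    exact gam_sum_bound R hCont hInt T hT n hn _
end

section
/- For any T > 0, any positive integer n, and any m ∈ {1,…,n}, the eigenvalue ψ̂_m = Σ_{k=0}^{n−1} γ̂_k e^{−2πimk/n} of the circulant matrix Â_{T,n} satisfies |ψ̂_m| ≤ 2∫_ℝ |R(τ)| dτ; consequently ‖Â_{T,n}‖₂ ≤ 2∫_ℝ |R(τ)| dτ uniformly over all T > 0 and n ∈ ℕ. -/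
open MeasureTheory Filter Finset Real

/-- `γ̂_0 = γ_0` and `γ̂_k = γ_k + γ_{n-k}` for `1 ≤ k ≤ n-1`. -/
noncomputable def gamHat (R : ℝ → ℝ) (T : ℝ) (n : ℕ) (k : ℕ) : ℝ :=
  if k = 0 then gam R T n 0 else gam R T n k + gam R T n ((n : ℤ) - k)

/-- The `n × n` circulant matrix `Â_{T,n}` with `(i,j)`-entry `γ̂_{(j-i) mod n}`
(`j - i` is subtraction in `Fin n`, i.e. subtraction mod `n`). -/
noncomputable def AHat (R : ℝ → ℝ) (T : ℝ) (n : ℕ) : Matrix (Fin n) (Fin n) ℝ :=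
  fun i j => gamHat R T n ((j - i : Fin n) : ℕ)

/-- `ψ̂_m = Σ_{k=0}^{n-1} γ̂_k e^{-2πimk/n}`, the eigenvalues of `Â_{T,n}`. -/
noncomputable def psiHat (R : ℝ → ℝ) (T : ℝ) (n : ℕ) (m : ℕ) : ℂ :=
  ∑ k ∈ Finset.range n,
    (gamHat R T n k : ℂ) * Complex.exp (-2 * Real.pi * Complex.I * m * k / n)

/-- Schur test for the `ℓ²` operator norm of a real matrix. -/
lemma schur_test {n : ℕ} (A : Matrix (Fin n) (Fin n) ℝ) (C : ℝ) (hC : 0 ≤ C)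
    (h1 : ∀ i, ∑ j, |A i j| ≤ C) (h2 : ∀ j, ∑ i, |A i j| ≤ C) :
    ‖Matrix.toEuclideanCLM (𝕜 := ℝ) A‖ ≤ C := by
  refine ContinuousLinearMap.opNorm_le_bound _ hC fun x => ?_
  have hx : ∀ i, (Matrix.toEuclideanCLM (𝕜 := ℝ) A) x i = ∑ j, A i j * x j := by
    intro i
    have h := congrFun (Matrix.ofLp_toEuclideanCLM A x) i
    simpa [Matrix.toLin'_apply, Matrix.mulVec, dotProduct] using h
  rw [EuclideanSpace.norm_eq, EuclideanSpace.norm_eq]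
  have key : ∑ i, ‖(Matrix.toEuclideanCLM (𝕜 := ℝ) A) x i‖ ^ 2
      ≤ C ^ 2 * ∑ j, ‖x j‖ ^ 2 := by
    simp only [Real.norm_eq_abs, sq_abs]
    calc ∑ i, ((Matrix.toEuclideanCLM (𝕜 := ℝ) A) x i) ^ 2
        ≤ ∑ i, C * ∑ j, |A i j| * (x j) ^ 2 := by
          refine Finset.sum_le_sum fun i _ => ?_
          rw [hx i]
          have cs := Finset.sum_mul_sq_le_sq_mul_sq Finset.univ
            (fun j => Real.sqrt |A i j|) (fun j => Real.sqrt |A i j| * |x j|)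
          have e1 : ∀ j : Fin n, Real.sqrt |A i j| * (Real.sqrt |A i j| * |x j|)
              = |A i j * x j| := fun j => by
            rw [← mul_assoc, Real.mul_self_sqrt (abs_nonneg _), abs_mul]
          have e2 : ∀ j : Fin n, (Real.sqrt |A i j|) ^ 2 = |A i j| := fun j =>
            Real.sq_sqrt (abs_nonneg _)
          have e3 : ∀ j : Fin n, (Real.sqrt |A i j| * |x j|) ^ 2
              = |A i j| * (x j) ^ 2 := fun j => by
            rw [mul_pow, Real.sq_sqrt (abs_nonneg _), sq_abs]
          simp only [e1, e2, e3] at cs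
          have habs : (∑ j, A i j * x j) ^ 2 ≤ (∑ j, |A i j * x j|) ^ 2 := by
            rw [← sq_abs]
            exact pow_le_pow_left₀ (abs_nonneg _) (Finset.abs_sum_le_sum_abs _ _) 2
          have hmul : (∑ j, |A i j|) * ∑ j, |A i j| * (x j) ^ 2
              ≤ C * ∑ j, |A i j| * (x j) ^ 2 := by
            apply mul_le_mul_of_nonneg_right (h1 i)
            exact Finset.sum_nonneg fun j _ => mul_nonneg (abs_nonneg _) (sq_nonneg _)
          linarith
      _ = C * ∑ j, (∑ i, |A i j|) * (x j) ^ 2 := by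
          rw [← Finset.mul_sum, Finset.sum_comm]
          congr 1
          exact Finset.sum_congr rfl fun j _ => (Finset.sum_mul _ _ _).symm
      _ ≤ C * ∑ j, C * (x j) ^ 2 := by
          apply mul_le_mul_of_nonneg_left _ hC
          exact Finset.sum_le_sum fun j _ =>
            mul_le_mul_of_nonneg_right (h2 j) (sq_nonneg _)
      _ = C ^ 2 * ∑ j, (x j) ^ 2 := by rw [← Finset.mul_sum]; ring
  calc √(∑ i, ‖(Matrix.toEuclideanCLM (𝕜 := ℝ) A) x i‖ ^ 2)
      ≤ √(C ^ 2 * ∑ j, ‖x j‖ ^ 2) := Real.sqrt_le_sqrt key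
    _ = C * √(∑ j, ‖x j‖ ^ 2) := by
        rw [Real.sqrt_mul (sq_nonneg C), Real.sqrt_sq hC]

/-- Key estimate: the sum of `|γ_l|` over `0 ≤ l < N` is at most `∫ |R|`. -/
lemma sum_abs_gam_le (R : ℝ → ℝ) (hInt : Integrable R) (T : ℝ) (hT : 0 < T)
    (n : ℕ) (hn : 0 < n) (N : ℕ) :
    ∑ l ∈ Finset.range N, |gam R T n (l : ℤ)| ≤ ∫ τ, |R τ| := by
  have hn' : (0:ℝ) < (n:ℝ) := by exact_mod_cast hn
  have hTn : (0:ℝ) < T / n := div_pos hT hn'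
  have hRabs : Integrable (fun t => |R t|) := hInt.abs
  set I := ∫ τ, |R τ| with hI
  have hI0 : 0 ≤ I := integral_nonneg fun t => abs_nonneg _
  set G : ℝ → ℝ := fun x => ∫ t in (0:ℝ)..x, |R t| with hG
  set GR : ℝ → ℝ := fun x => ∫ t in (0:ℝ)..x, R t with hGR
  have hGcont : Continuous G :=
    intervalIntegral.continuous_primitive (fun a b => hRabs.intervalIntegrable) 0
  have hGRcont : Continuous GR :=
    intervalIntegral.continuous_primitive (fun a b => hInt.intervalIntegrable) 0
  have Gdiff : ∀ x y : ℝ, G y - G x ≤ I := by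
    intro x y
    rcases le_total x y with h | h
    · have : G y - G x = ∫ t in x..y, |R t| :=
        intervalIntegral.integral_interval_sub_left hRabs.intervalIntegrable
          hRabs.intervalIntegrable
      rw [this, intervalIntegral.integral_of_le h]
      exact setIntegral_le_integral hRabs (Eventually.of_forall fun t => abs_nonneg _)
    · have h1 : 0 ≤ G x - G y := by
        have : G x - G y = ∫ t in y..x, |R t| :=
          intervalIntegral.integral_interval_sub_left hRabs.intervalIntegrable
            hRabs.intervalIntegrable
        rw [this]
        exact intervalIntegral.integral_nonneg h fun t _ => abs_nonneg _
      linarith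
  -- continuity of the inner integrals as functions of u
  have hinner_eq : ∀ a b u : ℝ, (∫ v in a..b, R (v - u)) = GR (b - u) - GR (a - u) := by
    intro a b u
    rw [intervalIntegral.integral_comp_sub_right R u]
    exact (intervalIntegral.integral_interval_sub_left hInt.intervalIntegrable
      hInt.intervalIntegrable).symm
  have hinner_cont : ∀ a b : ℝ, Continuous (fun u => ∫ v in a..b, R (v - u)) := by
    intro a b
    have : (fun u => ∫ v in a..b, R (v - u)) = fun u => GR (b - u) - GR (a - u) :=
      funext fun u => hinner_eq a b u
    rw [this]
    exact ((hGRcont.comp (continuous_const.sub continuous_id)).sub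
      (hGRcont.comp (continuous_const.sub continuous_id)))
  have hD_cont : ∀ a b : ℝ, Continuous (fun u => G (b - u) - G (a - u)) := by
    intro a b
    exact ((hGcont.comp (continuous_const.sub continuous_id)).sub
      (hGcont.comp (continuous_const.sub continuous_id)))
  -- pointwise bound on the inner integral
  have hpt : ∀ a b u : ℝ, a ≤ b → |∫ v in a..b, R (v - u)| ≤ G (b - u) - G (a - u) := by
    intro a b u hab
    rw [intervalIntegral.integral_comp_sub_right R u]
    have h1 : |∫ v in (a - u)..(b - u), R v| ≤ ∫ v in (a - u)..(b - u), |R v| :=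
      intervalIntegral.abs_integral_le_integral_abs (by linarith)
    have h2 : (∫ v in (a - u)..(b - u), |R v|) = G (b - u) - G (a - u) :=
      (intervalIntegral.integral_interval_sub_left hRabs.intervalIntegrable
        hRabs.intervalIntegrable).symm
    linarith
  -- per-term bound
  have per : ∀ l : ℕ, |gam R T n (l : ℤ)| ≤
      ((n:ℝ) / T) * ∫ u in (0:ℝ)..(T / n),
        (G (((l:ℝ) + 1) * T / n - u) - G ((l:ℝ) * T / n - u)) := by
    intro l
    have hcast : (((l : ℤ) : ℝ)) = (l : ℝ) := by push_cast; rfl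
    unfold gam
    rw [hcast, abs_mul, abs_of_nonneg (le_of_lt (div_pos hn' hT))]
    apply mul_le_mul_of_nonneg_left _ (le_of_lt (div_pos hn' hT))
    set a := (l:ℝ) * T / n with ha
    set b := ((l:ℝ) + 1) * T / n with hb
    have hab : a ≤ b := by
      have : b - a = T / n := by rw [ha, hb]; ring
      linarith
    calc |∫ u in (0:ℝ)..(T / n), ∫ v in a..b, R (v - u)|
        ≤ ∫ u in (0:ℝ)..(T / n), |∫ v in a..b, R (v - u)| :=
          intervalIntegral.abs_integral_le_integral_abs hTn.le
      _ ≤ ∫ u in (0:ℝ)..(T / n), (G (b - u) - G (a - u)) := by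
          apply intervalIntegral.integral_mono_on hTn.le
          · exact ((hinner_cont a b).abs).intervalIntegrable _ _
          · exact (hD_cont a b).intervalIntegrable _ _
          · exact fun u _ => hpt a b u hab
      _ = ∫ u in (0:ℝ)..(T / n), (G (((l:ℝ) + 1) * T / n - u) - G ((l:ℝ) * T / n - u)) := rfl
  -- sum them up and telescope
  have tele : ∀ u : ℝ, ∑ l ∈ Finset.range N,
      (G (((l:ℝ) + 1) * T / n - u) - G ((l:ℝ) * T / n - u))
      = G ((N:ℝ) * T / n - u) - G (((0:ℕ):ℝ) * T / n - u) := by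
    intro u
    have h := Finset.sum_range_sub (fun m : ℕ => G ((m:ℝ) * T / n - u)) N
    rw [← h]
    refine Finset.sum_congr rfl fun l _ => ?_
    have : ((l:ℝ) + 1) * T / n - u = (((l + 1 : ℕ)):ℝ) * T / n - u := by push_cast; ring
    rw [this]
  calc ∑ l ∈ Finset.range N, |gam R T n (l : ℤ)|
      ≤ ∑ l ∈ Finset.range N, ((n:ℝ) / T) * ∫ u in (0:ℝ)..(T / n),
          (G (((l:ℝ) + 1) * T / n - u) - G ((l:ℝ) * T / n - u)) :=
        Finset.sum_le_sum fun l _ => per l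
    _ = ((n:ℝ) / T) * ∑ l ∈ Finset.range N, ∫ u in (0:ℝ)..(T / n),
          (G (((l:ℝ) + 1) * T / n - u) - G ((l:ℝ) * T / n - u)) := by
        rw [Finset.mul_sum]
    _ = ((n:ℝ) / T) * ∫ u in (0:ℝ)..(T / n), ∑ l ∈ Finset.range N,
          (G (((l:ℝ) + 1) * T / n - u) - G ((l:ℝ) * T / n - u)) := by
        rw [intervalIntegral.integral_finset_sum]
        intro l _
        exact (hD_cont _ _).intervalIntegrable _ _
    _ ≤ ((n:ℝ) / T) * ∫ _u in (0:ℝ)..(T / n), I := by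
        apply mul_le_mul_of_nonneg_left _ (le_of_lt (div_pos hn' hT))
        apply intervalIntegral.integral_mono_on hTn.le
        · apply Continuous.intervalIntegrable
          exact continuous_finset_sum _ fun l _ => hD_cont _ _
        · exact intervalIntegrable_const
        · intro u _
          rw [tele u]
          exact Gdiff _ _
    _ = ((n:ℝ) / T) * ((T / n) * I) := by
        rw [intervalIntegral.integral_const]
        simp [smul_eq_mul]
    _ = I := by field_simp
theorem stmt_4 (R : ℝ → ℝ) (hEven : ∀ τ, R (-τ) = R τ) (hCont : Continuous R)
    (hBdd : ∃ M, ∀ τ, |R τ| ≤ M) (hInt : Integrable R)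
    (T : ℝ) (hT : 0 < T) (n : ℕ) (hn : 0 < n) :
    (∀ m ∈ Finset.Icc 1 n, ‖psiHat R T n m‖ ≤ 2 * ∫ τ, |R τ|) ∧
      ‖Matrix.toEuclideanCLM (𝕜 := ℝ) (AHat R T n)‖ ≤ 2 * ∫ τ, |R τ| := by
  haveI : NeZero n := ⟨hn.ne'⟩
  set I := ∫ τ, |R τ| with hI
  have hI0 : 0 ≤ I := integral_nonneg fun t => abs_nonneg _
  -- Step 1: ∑ |γ̂_k| ≤ 2I
  have hsum : ∑ k ∈ Finset.range n, |gamHat R T n k| ≤ 2 * I := by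
    have hptwise : ∀ k ∈ Finset.range n,
        |gamHat R T n k| ≤ |gam R T n (k : ℤ)| + |gam R T n ((n : ℤ) - k)| := by
      intro k _
      by_cases hk : k = 0
      · subst hk
        simp only [gamHat, if_pos rfl]
        simpa using le_add_of_nonneg_right (abs_nonneg (gam R T n ((n:ℤ) - 0)))
      · simp only [gamHat, if_neg hk]
        exact abs_add_le _ _
    have hsum1 : ∑ k ∈ Finset.range n, |gam R T n (k : ℤ)| ≤ I :=
      sum_abs_gam_le R hInt T hT n hn n
    have hsum2 : ∑ k ∈ Finset.range n, |gam R T n ((n : ℤ) - k)| ≤ I := by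
      have hre : ∑ k ∈ Finset.range n, |gam R T n ((n : ℤ) - k)|
          = ∑ k ∈ Finset.range n, |gam R T n ((k : ℤ) + 1)| := by
        rw [← Finset.sum_range_reflect (fun j : ℕ => |gam R T n ((j : ℤ) + 1)|) n]
        refine Finset.sum_congr rfl fun k hk => ?_
        have hk' : k < n := Finset.mem_range.mp hk
        have : (n : ℤ) - k = ((n - 1 - k : ℕ) : ℤ) + 1 := by omega
        rw [this]
      rw [hre]
      calc ∑ k ∈ Finset.range n, |gam R T n ((k : ℤ) + 1)|
          ≤ ∑ l ∈ Finset.range (n + 1), |gam R T n (l : ℤ)| := by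
            rw [Finset.sum_range_succ' (fun l : ℕ => |gam R T n (l : ℤ)|) n]
            have : ∀ k ∈ Finset.range n, |gam R T n ((k : ℤ) + 1)|
                = |gam R T n (((k + 1 : ℕ) : ℤ))| := by
              intro k _; norm_cast
            rw [Finset.sum_congr rfl this]
            exact le_add_of_nonneg_right (abs_nonneg _)
        _ ≤ I := sum_abs_gam_le R hInt T hT n hn (n + 1)
    calc ∑ k ∈ Finset.range n, |gamHat R T n k|
        ≤ ∑ k ∈ Finset.range n, (|gam R T n (k : ℤ)| + |gam R T n ((n : ℤ) - k)|) :=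
          Finset.sum_le_sum hptwise
      _ = (∑ k ∈ Finset.range n, |gam R T n (k : ℤ)|)
          + ∑ k ∈ Finset.range n, |gam R T n ((n : ℤ) - k)| := Finset.sum_add_distrib
      _ ≤ I + I := add_le_add hsum1 hsum2
      _ = 2 * I := by ring
  constructor
  · -- eigenvalue bound
    intro m _
    calc ‖psiHat R T n m‖
        ≤ ∑ k ∈ Finset.range n, ‖
            ((gamHat R T n k : ℂ) * Complex.exp (-2 * Real.pi * Complex.I * m * k / n))‖ :=
          norm_sum_le _ _
      _ = ∑ k ∈ Finset.range n, |gamHat R T n k| := by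
          refine Finset.sum_congr rfl fun k _ => ?_
          rw [norm_mul, Complex.norm_real, Real.norm_eq_abs]
          have hz : (-2 * (Real.pi : ℂ) * Complex.I * m * k / n)
              = ((-2 * Real.pi * m * k / n : ℝ) : ℂ) * Complex.I := by
            push_cast; ring
          rw [hz, Complex.norm_exp_ofReal_mul_I, mul_one]
      _ ≤ 2 * I := hsum
  · -- operator norm bound
    apply schur_test _ (2 * I) (by linarith)
    · intro i
      have : ∑ j, |AHat R T n i j| = ∑ k ∈ Finset.range n, |gamHat R T n k| := by
        rw [← Fin.sum_univ_eq_sum_range (fun k => |gamHat R T n k|) n]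
        exact Fintype.sum_equiv (Equiv.subRight i) _ _ fun j => rfl
      rw [this]; exact hsum
    · intro j
      have : ∑ i, |AHat R T n i j| = ∑ k ∈ Finset.range n, |gamHat R T n k| := by
        rw [← Fin.sum_univ_eq_sum_range (fun k => |gamHat R T n k|) n]
        exact Fintype.sum_equiv (Equiv.subLeft j) _ _ fun i => rfl
      rw [this]; exact hsum
end

section
/- For any T > 0 and any positive integer n, the Frobenius norm of the Toeplitz matrix A_{T,n} satisfies ‖A_{T,n}‖_F²/T ≤ (∫_ℝ |R(τ)| dτ)·(sup_{τ∈ℝ} |R(τ)|); in particular ‖A_{T,n}‖_F²/T is bounded uniformly over all T > 0 and n ∈ ℕ. -/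
open MeasureTheory Filter Finset Real

lemma cont_shift_integral (f : ℝ → ℝ) (hf : Continuous f) (a b : ℝ) :
    Continuous fun u => ∫ v in a..b, f (v - u) := by
  have key : ∀ u, (∫ v in a..b, f (v - u))
      = (∫ v in (0:ℝ)..(b - u), f v) - ∫ v in (0:ℝ)..(a - u), f v := by
    intro u
    rw [intervalIntegral.integral_comp_sub_right (fun v => f v) u,
      ← intervalIntegral.integral_interval_sub_left (hf.intervalIntegrable 0 (b - u))
        (hf.intervalIntegrable 0 (a - u))]
  simp only [key]
  have hprim : Continuous fun x => ∫ v in (0:ℝ)..x, f v :=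
    intervalIntegral.continuous_primitive (fun a b => hf.intervalIntegrable a b) 0
  exact (hprim.comp (continuous_const.sub continuous_id)).sub
    (hprim.comp (continuous_const.sub continuous_id))

theorem stmt_5 (R : ℝ → ℝ) (hEven : ∀ τ, R (-τ) = R τ) (hCont : Continuous R)
    (hBdd : ∃ M, ∀ τ, |R τ| ≤ M) (hInt : Integrable R)
    (T : ℝ) (hT : 0 < T) (n : ℕ) (hn : 0 < n) :
    (∑ i, ∑ j, (AMat R T n i j) ^ 2) / T ≤ (∫ τ, |R τ|) * (⨆ τ, |R τ|) := by
  obtain ⟨M, hM⟩ := hBdd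
  set S := ⨆ τ, |R τ| with hSdef
  have hbdd : BddAbove (Set.range fun τ => |R τ|) := ⟨M, by rintro x ⟨τ, rfl⟩; exact hM τ⟩
  have hS : ∀ τ, |R τ| ≤ S := fun τ => le_ciSup hbdd τ
  have hS0 : 0 ≤ S := le_trans (abs_nonneg _) (hS 0)
  set I := ∫ τ, |R τ| with hIdef
  have hI0 : 0 ≤ I := integral_nonneg fun τ => abs_nonneg _
  have hn' : (0:ℝ) < n := by exact_mod_cast hn
  have hTn : 0 < T / n := div_pos hT hn'
  have hnT : (0:ℝ) ≤ (n:ℝ) / T := le_of_lt (div_pos hn' hT)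
  -- pointwise bound on |gam|
  have hA : ∀ l : ℤ, |gam R T n l| ≤ S * (T / n) := by
    intro l
    have hinner : ∀ u : ℝ,
        ‖∫ v in ((l : ℝ) * T / n)..(((l : ℝ) + 1) * T / n), R (v - u)‖ ≤ S * (T / n) := by
      intro u
      have := intervalIntegral.norm_integral_le_of_norm_le_const
        (C := S) (a := (l : ℝ) * T / n) (b := ((l : ℝ) + 1) * T / n)
        (f := fun v => R (v - u)) (fun x _ => by simpa using hS (x - u))
      calc ‖∫ v in ((l : ℝ) * T / n)..(((l : ℝ) + 1) * T / n), R (v - u)‖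
          ≤ S * |((l : ℝ) + 1) * T / n - (l : ℝ) * T / n| := this
        _ = S * (T / n) := by rw [show ((l : ℝ) + 1) * T / n - (l : ℝ) * T / n = T / n by ring,
            abs_of_pos hTn]
    have houter : ‖∫ u in (0:ℝ)..(T / n),
        ∫ v in ((l : ℝ) * T / n)..(((l : ℝ) + 1) * T / n), R (v - u)‖
        ≤ (S * (T / n)) * |T / n - 0| :=
      intervalIntegral.norm_integral_le_of_norm_le_const (fun u _ => hinner u)
    have : |gam R T n l| ≤ ((n:ℝ) / T) * ((S * (T / n)) * |T / n - 0|) := by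
      rw [gam, abs_mul, abs_of_nonneg hnT]
      exact mul_le_mul_of_nonneg_left houter hnT
    calc |gam R T n l| ≤ ((n:ℝ) / T) * ((S * (T / n)) * |T / n - 0|) := this
      _ = S * (T / n) := by
          rw [sub_zero, abs_of_pos hTn]; field_simp
  -- row sum bound
  have hB : ∀ i : Fin n, ∑ j : Fin n, |gam R T n ((j : ℤ) - (i : ℤ))| ≤ I := by
    intro i
    set g : ℤ → ℝ → ℝ :=
      fun l u => ∫ v in ((l : ℝ) * T / n)..(((l : ℝ) + 1) * T / n), |R (v - u)| with hg
    have hgcont : ∀ l : ℤ, Continuous (g l) := fun l =>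
      cont_shift_integral (fun w => |R w|) hCont.abs _ _
    have hFcont : ∀ l : ℤ, Continuous fun u =>
        ∫ v in ((l : ℝ) * T / n)..(((l : ℝ) + 1) * T / n), R (v - u) := fun l =>
      cont_shift_integral R hCont _ _
    -- step 1: |gam l| ≤ (n/T) * ∫ g l
    have step1 : ∀ l : ℤ, |gam R T n l| ≤ ((n:ℝ) / T) * ∫ u in (0:ℝ)..(T / n), g l u := by
      intro l
      rw [gam, abs_mul, abs_of_nonneg hnT]
      refine mul_le_mul_of_nonneg_left ?_ hnT
      calc |∫ u in (0:ℝ)..(T / n),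
            ∫ v in ((l : ℝ) * T / n)..(((l : ℝ) + 1) * T / n), R (v - u)|
          ≤ ∫ u in (0:ℝ)..(T / n),
            |∫ v in ((l : ℝ) * T / n)..(((l : ℝ) + 1) * T / n), R (v - u)| :=
            intervalIntegral.abs_integral_le_integral_abs hTn.le
        _ ≤ ∫ u in (0:ℝ)..(T / n), g l u := by
            refine intervalIntegral.integral_mono_on hTn.le
              ((hFcont l).abs.intervalIntegrable _ _) ((hgcont l).intervalIntegrable _ _)
              (fun u _ => ?_)
            have hab : (l : ℝ) * T / n ≤ ((l : ℝ) + 1) * T / n := by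
              have : ((l : ℝ) + 1) * T / n - (l : ℝ) * T / n = T / n := by ring
              linarith [hTn]
            exact intervalIntegral.abs_integral_le_integral_abs hab
    -- step 2: pointwise sum bound
    have step2 : ∀ u : ℝ, ∑ j : Fin n, g ((j : ℤ) - (i : ℤ)) u ≤ I := by
      intro u
      set a : ℕ → ℝ := fun k => ((k : ℝ) - (i : ℝ)) * T / n with ha
      have hcast : ∀ k : ℕ, g ((k : ℤ) - (i : ℤ)) u
          = ∫ v in (a k)..(a (k + 1)), |R (v - u)| := by
        intro k
        have h1 : (((k : ℤ) - (i : ℤ) : ℤ) : ℝ) * T / n = a k := by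
          simp only [ha]; push_cast; ring
        have h2 : ((((k : ℤ) - (i : ℤ) : ℤ) : ℝ) + 1) * T / n = a (k + 1) := by
          simp only [ha]; push_cast; ring
        simp only [hg, h1, h2]
      have hsum : ∑ j : Fin n, g ((j : ℤ) - (i : ℤ)) u
          = ∫ v in (a 0)..(a n), |R (v - u)| := by
        rw [Fin.sum_univ_eq_sum_range (fun k => g ((k : ℤ) - (i : ℤ)) u)]
        rw [Finset.sum_congr rfl (fun k _ => hcast k)]
        exact intervalIntegral.sum_integral_adjacent_intervals (fun k _ =>
          ((hCont.comp (continuous_id.sub continuous_const)).abs.intervalIntegrable _ _))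
      rw [hsum]
      have h0n : a 0 ≤ a n := by
        have : a n - a 0 = T := by
          simp only [ha]; push_cast; field_simp; ring
        linarith [hT.le]
      have hIntShift : Integrable (fun v => |R (v - u)|) := by
        exact (hInt.abs).comp_sub_right u
      calc (∫ v in (a 0)..(a n), |R (v - u)|)
          = ∫ v in Set.Ioc (a 0) (a n), |R (v - u)| := intervalIntegral.integral_of_le h0n
        _ ≤ ∫ v, |R (v - u)| := setIntegral_le_integral hIntShift
            (Eventually.of_forall fun v => abs_nonneg _)
        _ = I := by rw [hIdef]; exact integral_sub_right_eq_self (fun τ => |R τ|) u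
    -- assemble
    calc ∑ j : Fin n, |gam R T n ((j : ℤ) - (i : ℤ))|
        ≤ ∑ j : Fin n, ((n:ℝ) / T) * ∫ u in (0:ℝ)..(T / n), g ((j : ℤ) - (i : ℤ)) u :=
          Finset.sum_le_sum fun j _ => step1 _
      _ = ((n:ℝ) / T) * ∑ j : Fin n, ∫ u in (0:ℝ)..(T / n), g ((j : ℤ) - (i : ℤ)) u := by
          rw [Finset.mul_sum]
      _ = ((n:ℝ) / T) * ∫ u in (0:ℝ)..(T / n), ∑ j : Fin n, g ((j : ℤ) - (i : ℤ)) u := by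
          rw [intervalIntegral.integral_finset_sum (fun j _ =>
            (hgcont _).intervalIntegrable _ _)]
      _ ≤ ((n:ℝ) / T) * ∫ u in (0:ℝ)..(T / n), I := by
          refine mul_le_mul_of_nonneg_left ?_ hnT
          refine intervalIntegral.integral_mono_on hTn.le ?_
            (intervalIntegrable_const) (fun u _ => step2 u)
          exact (continuous_finset_sum _ fun j _ => hgcont _).intervalIntegrable _ _
      _ = I := by
          rw [intervalIntegral.integral_const, smul_eq_mul, sub_zero]
          field_simp
  -- final assembly
  rw [div_le_iff₀ hT]
  simp only [AMat]
  calc ∑ i : Fin n, ∑ j : Fin n, (gam R T n ((j : ℤ) - (i : ℤ))) ^ 2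
      ≤ ∑ i : Fin n, ∑ j : Fin n, (S * (T / n)) * |gam R T n ((j : ℤ) - (i : ℤ))| := by
        refine Finset.sum_le_sum fun i _ => Finset.sum_le_sum fun j _ => ?_
        calc (gam R T n ((j : ℤ) - (i : ℤ))) ^ 2
            = |gam R T n ((j : ℤ) - (i : ℤ))| * |gam R T n ((j : ℤ) - (i : ℤ))| := by
              rw [← sq_abs, sq]
          _ ≤ (S * (T / n)) * |gam R T n ((j : ℤ) - (i : ℤ))| :=
              mul_le_mul_of_nonneg_right (hA _) (abs_nonneg _)
    _ = ∑ i : Fin n, (S * (T / n)) * ∑ j : Fin n, |gam R T n ((j : ℤ) - (i : ℤ))| := by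
        simp [Finset.mul_sum]
    _ ≤ ∑ i : Fin n, (S * (T / n)) * I :=
        Finset.sum_le_sum fun i _ =>
          mul_le_mul_of_nonneg_left (hB i) (mul_nonneg hS0 hTn.le)
    _ = (n : ℝ) * ((S * (T / n)) * I) := by
        rw [Finset.sum_const, Finset.card_univ, Fintype.card_fin, nsmul_eq_mul]
    _ = I * S * T := by field_simp
end

section
/- For any T > 0 and any positive integer n, the Frobenius norm of the circulant matrix Â_{T,n} satisfies ‖Â_{T,n}‖_F²/T ≤ 2·(∫_ℝ |R(τ)| dτ)·(sup_{τ∈ℝ} |R(τ)|); in particular ‖Â_{T,n}‖_F²/T is bounded uniformly over all T > 0 and n ∈ ℕ. -/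
open MeasureTheory Filter Finset Real

noncomputable def Pabs (R : ℝ → ℝ) (x : ℝ) : ℝ := ∫ t in (0:ℝ)..x, |R t|
noncomputable def Psgn (R : ℝ → ℝ) (x : ℝ) : ℝ := ∫ t in (0:ℝ)..x, R t

section Aux
variable {R : ℝ → ℝ} (hInt : Integrable R)
include hInt

lemma Pabs_cont : Continuous (Pabs R) := hInt.abs.continuous_primitive 0

lemma Psgn_cont : Continuous (Psgn R) := hInt.continuous_primitive 0

lemma Pabs_sub {a b : ℝ} : Pabs R b - Pabs R a = ∫ t in a..b, |R t| :=
  intervalIntegral.integral_interval_sub_left hInt.abs.intervalIntegrable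
    hInt.abs.intervalIntegrable

lemma Psgn_sub {a b : ℝ} : Psgn R b - Psgn R a = ∫ t in a..b, R t :=
  intervalIntegral.integral_interval_sub_left hInt.intervalIntegrable hInt.intervalIntegrable

lemma Pabs_sub_le {a b : ℝ} (hab : a ≤ b) : Pabs R b - Pabs R a ≤ ∫ τ, |R τ| := by
  rw [Pabs_sub hInt, intervalIntegral.integral_of_le hab]
  exact setIntegral_le_integral hInt.abs (Eventually.of_forall fun x => abs_nonneg _)

lemma abs_Psgn_sub_le {a b : ℝ} (hab : a ≤ b) :
    |Psgn R b - Psgn R a| ≤ Pabs R b - Pabs R a := by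
  rw [Psgn_sub hInt, Pabs_sub hInt]
  exact intervalIntegral.abs_integral_le_integral_abs hab

lemma inner_eq (u a b : ℝ) :
    (∫ v in a..b, R (v - u)) = Psgn R (b - u) - Psgn R (a - u) := by
  rw [intervalIntegral.integral_comp_sub_right (f := R) u, Psgn_sub hInt]

lemma gam_eq (T : ℝ) (n : ℕ) (l : ℤ) :
    gam R T n l = ((n:ℝ)/T) * ∫ u in (0:ℝ)..(T/n),
      (Psgn R (((l:ℝ)+1)*(T/n) - u) - Psgn R ((l:ℝ)*(T/n) - u)) := by
  unfold gam
  congr 1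
  refine intervalIntegral.integral_congr fun u _ => ?_
  rw [inner_eq hInt, mul_div_assoc, mul_div_assoc]

omit hInt in
lemma Psgn_odd (hEven : ∀ τ, R (-τ) = R τ) (x : ℝ) : Psgn R (-x) = - Psgn R x := by
  have h1 : (∫ t in (0:ℝ)..x, R (-t)) = ∫ t in (-x)..(0:ℝ), R t := by
    simpa using intervalIntegral.integral_comp_neg (f := R) (a := 0) (b := x)
  have h2 : (∫ t in (0:ℝ)..x, R t) = ∫ t in (-x)..(0:ℝ), R t := by
    rw [← h1]; exact intervalIntegral.integral_congr fun t _ => (hEven t).symm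
  have h3 : (∫ t in (0:ℝ)..(-x), R t) = -∫ t in (-x)..(0:ℝ), R t :=
    intervalIntegral.integral_symm (-x) 0
  show (∫ t in (0:ℝ)..(-x), R t) = -∫ t in (0:ℝ)..x, R t
  rw [h3, h2]

lemma gam_neg (hEven : ∀ τ, R (-τ) = R τ) (T : ℝ) (n : ℕ) (l : ℤ) :
    gam R T n (-l) = gam R T n l := by
  set c := T / (n:ℝ) with hc
  set L := (l:ℝ) with hL
  rw [gam_eq hInt, gam_eq hInt]
  push_cast
  congr 1
  set H : ℝ → ℝ := fun w => Psgn R ((L+1)*c - w) - Psgn R (L*c - w) with hH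
  have e1 : ∀ u : ℝ, Psgn R ((-L+1)*c - u) - Psgn R ((-L)*c - u) = H (c - u) := by
    intro u
    have a1 : (-L+1)*c - u = -((L-1)*c + u) := by ring
    have a2 : (-L)*c - u = -(L*c + u) := by ring
    rw [a1, a2, Psgn_odd hEven, Psgn_odd hEven]
    have b1 : (L+1)*c - (c-u) = L*c + u := by ring
    have b2 : L*c - (c-u) = (L-1)*c + u := by ring
    simp only [hH, b1, b2]
    ring
  calc (∫ u in (0:ℝ)..c, (Psgn R ((-L+1)*c - u) - Psgn R ((-L)*c - u)))
      = ∫ u in (0:ℝ)..c, H (c - u) := intervalIntegral.integral_congr fun u _ => e1 u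
    _ = ∫ u in (c - c)..(c - 0), H u := intervalIntegral.integral_comp_sub_left H c
    _ = ∫ u in (0:ℝ)..c, (Psgn R ((L+1)*c - u) - Psgn R (L*c - u)) := by simp [hH]

/-- crude sup bound -/
lemma gam_le_M {M : ℝ} (hM : ∀ τ, |R τ| ≤ M) {T : ℝ} (hT : 0 < T) {n : ℕ} (hn : 0 < n)
    (l : ℤ) : |gam R T n l| ≤ M * T / n := by
  have hn' : (0:ℝ) < n := by exact_mod_cast hn
  have hc : (0:ℝ) < T / n := div_pos hT hn'
  have hM0 : 0 ≤ M := le_trans (abs_nonneg _) (hM 0)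
  have hin : ∀ u : ℝ, |∫ v in ((l:ℝ) * T / n)..(((l:ℝ)+1) * T / n), R (v - u)| ≤ M * (T/n) := by
    intro u
    have := intervalIntegral.norm_integral_le_of_norm_le_const
      (a := (l:ℝ) * T / n) (b := ((l:ℝ)+1) * T / n) (C := M)
      (f := fun v => R (v - u)) (fun x _ => hM _)
    rw [Real.norm_eq_abs] at this
    refine this.trans ?_
    have : |((l:ℝ)+1) * T / n - (l:ℝ) * T / n| = T / n := by
      rw [show ((l:ℝ)+1) * T / n - (l:ℝ) * T / n = T / n by ring]
      exact abs_of_pos hc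
    rw [this]
  have hout : |∫ u in (0:ℝ)..(T/n),
      ∫ v in ((l:ℝ) * T / n)..(((l:ℝ)+1) * T / n), R (v - u)| ≤ (M * (T/n)) * (T/n) := by
    have := intervalIntegral.norm_integral_le_of_norm_le_const
      (a := (0:ℝ)) (b := T/n) (C := M * (T/n))
      (f := fun u => ∫ v in ((l:ℝ) * T / n)..(((l:ℝ)+1) * T / n), R (v - u))
      (fun u _ => by rw [Real.norm_eq_abs]; exact hin u)
    rw [Real.norm_eq_abs] at this
    refine this.trans ?_
    rw [sub_zero, abs_of_pos hc]
  unfold gam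
  rw [abs_mul, abs_of_nonneg (le_of_lt (div_pos hn' hT))]
  calc (n:ℝ)/T * |∫ u in (0:ℝ)..(T/n),
        ∫ v in ((l:ℝ) * T / n)..(((l:ℝ)+1) * T / n), R (v - u)|
      ≤ (n:ℝ)/T * ((M * (T/n)) * (T/n)) := by
        exact mul_le_mul_of_nonneg_left hout (le_of_lt (div_pos hn' hT))
    _ = M * T / n := by field_simp

/-- the key L¹-type bound -/
lemma gam_abs_le {T : ℝ} (hT : 0 < T) {n : ℕ} (hn : 0 < n) (l : ℤ) :
    |gam R T n l| ≤ ((n:ℝ)/T) * ∫ u in (0:ℝ)..(T/n),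
      (Pabs R (((l:ℝ)+1)*(T/n) - u) - Pabs R ((l:ℝ)*(T/n) - u)) := by
  have hn' : (0:ℝ) < n := by exact_mod_cast hn
  have hc : (0:ℝ) < T / n := div_pos hT hn'
  have hnT : (0:ℝ) ≤ (n:ℝ)/T := le_of_lt (div_pos hn' hT)
  rw [gam_eq hInt, abs_mul, abs_of_nonneg hnT]
  refine mul_le_mul_of_nonneg_left ?_ hnT
  have hfc : Continuous fun u : ℝ =>
      |Psgn R (((l:ℝ)+1)*(T/n) - u) - Psgn R ((l:ℝ)*(T/n) - u)| :=
    (((Psgn_cont hInt).comp (continuous_const.sub continuous_id)).sub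
      ((Psgn_cont hInt).comp (continuous_const.sub continuous_id))).abs
  have hgc : Continuous fun u : ℝ =>
      Pabs R (((l:ℝ)+1)*(T/n) - u) - Pabs R ((l:ℝ)*(T/n) - u) :=
    ((Pabs_cont hInt).comp (continuous_const.sub continuous_id)).sub
      ((Pabs_cont hInt).comp (continuous_const.sub continuous_id))
  calc |∫ u in (0:ℝ)..(T/n),
        (Psgn R (((l:ℝ)+1)*(T/n) - u) - Psgn R ((l:ℝ)*(T/n) - u))|
      ≤ ∫ u in (0:ℝ)..(T/n),
        |Psgn R (((l:ℝ)+1)*(T/n) - u) - Psgn R ((l:ℝ)*(T/n) - u)| :=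
        intervalIntegral.abs_integral_le_integral_abs hc.le
    _ ≤ ∫ u in (0:ℝ)..(T/n),
        (Pabs R (((l:ℝ)+1)*(T/n) - u) - Pabs R ((l:ℝ)*(T/n) - u)) := by
        refine intervalIntegral.integral_mono_on hc.le (hfc.intervalIntegrable _ _)
          (hgc.intervalIntegrable _ _) fun u _ => ?_
        refine abs_Psgn_sub_le hInt ?_
        have : (l:ℝ)*(T/n) ≤ ((l:ℝ)+1)*(T/n) := by nlinarith
        linarith

end Aux


theorem stmt_6 (R : ℝ → ℝ) (hEven : ∀ τ, R (-τ) = R τ) (hCont : Continuous R)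
    (hBdd : ∃ M, ∀ τ, |R τ| ≤ M) (hInt : Integrable R)
    (T : ℝ) (hT : 0 < T) (n : ℕ) (hn : 0 < n) :
    (∑ i, ∑ j, (AHat R T n i j) ^ 2) / T ≤ 2 * (∫ τ, |R τ|) * (⨆ τ, |R τ|) := by
  obtain ⟨M0, hM0⟩ := hBdd
  have hbdd : BddAbove (Set.range fun τ => |R τ|) := ⟨M0, by rintro _ ⟨τ, rfl⟩; exact hM0 τ⟩
  set M := ⨆ τ, |R τ| with hMdef
  have hM : ∀ τ, |R τ| ≤ M := fun τ => le_ciSup hbdd τ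
  have hMnn : 0 ≤ M := le_trans (abs_nonneg _) (hM 0)
  set I := ∫ τ, |R τ| with hIdef
  have hInn : 0 ≤ I := integral_nonneg fun τ => abs_nonneg _
  have hn' : (0:ℝ) < n := by exact_mod_cast hn
  have hc : (0:ℝ) < T / n := div_pos hT hn'
  have hT0 : T ≠ 0 := ne_of_gt hT
  have hn0 : (n:ℝ) ≠ 0 := ne_of_gt hn'
  -- Step A: Frobenius sum = n * row sum
  haveI : NeZero n := ⟨hn.ne'⟩
  set S := ∑ k : Fin n, (gamHat R T n (k:ℕ))^2 with hSdef
  have hA : (∑ i, ∑ j, (AHat R T n i j)^2) = n * S := by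
    have hrow : ∀ i : Fin n, (∑ j, (AHat R T n i j)^2) = S := by
      intro i
      exact Fintype.sum_equiv (Equiv.subRight i) _ _ (fun j => rfl)
    rw [Finset.sum_congr rfl fun i _ => hrow i]
    simp [Finset.card_univ, nsmul_eq_mul]
  -- Step B : pointwise bound
  have hBpt : ∀ k : Fin n, |gamHat R T n (k:ℕ)| ≤ 2 * (M * T / n) := by
    intro k
    have hMTn : 0 ≤ M * T / n := div_nonneg (mul_nonneg hMnn hT.le) hn'.le
    by_cases hk : (k:ℕ) = 0
    · rw [gamHat, if_pos hk]
      calc |gam R T n 0| ≤ M * T / n := gam_le_M hInt hM hT hn 0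
        _ ≤ 2 * (M * T / n) := by linarith
    · rw [gamHat, if_neg hk]
      calc |gam R T n (k:ℕ) + gam R T n ((n:ℤ) - (k:ℕ))|
          ≤ |gam R T n (k:ℕ)| + |gam R T n ((n:ℤ) - (k:ℕ))| := abs_add_le _ _
        _ ≤ M * T / n + M * T / n := add_le_add (gam_le_M hInt hM hT hn _) (gam_le_M hInt hM hT hn _)
        _ = 2 * (M * T / n) := by ring
  -- the averaged primitive
  set Q : ℝ → ℝ := fun x => ∫ u in (0:ℝ)..(T/n), Pabs R (x - u) with hQdef
  have hQc : ∀ x : ℝ, Continuous fun u : ℝ => Pabs R (x - u) := fun x =>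
    (Pabs_cont hInt).comp (continuous_const.sub continuous_id)
  have hQsub : ∀ a b : ℝ, Q b - Q a
      = ∫ u in (0:ℝ)..(T/n), (Pabs R (b - u) - Pabs R (a - u)) := by
    intro a b
    exact (intervalIntegral.integral_sub ((hQc b).intervalIntegrable _ _)
      ((hQc a).intervalIntegrable _ _)).symm
  have hJ : ∀ l : ℤ, |gam R T n l|
      ≤ ((n:ℝ)/T) * (Q (((l:ℝ)+1)*(T/n)) - Q ((l:ℝ)*(T/n))) := by
    intro l
    refine (gam_abs_le hInt hT hn l).trans (le_of_eq ?_)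
    rw [hQsub]
  -- positive-index sum
  have sum1 : ∑ k ∈ Finset.range n, |gam R T n (k:ℤ)|
      ≤ ((n:ℝ)/T) * (Q ((n:ℝ)*(T/n)) - Q 0) := by
    set f1 : ℕ → ℝ := fun i => Q ((i:ℝ)*(T/n)) with hf1
    calc ∑ k ∈ Finset.range n, |gam R T n (k:ℤ)|
        ≤ ∑ k ∈ Finset.range n, ((n:ℝ)/T) * (f1 (k+1) - f1 k) := by
          refine Finset.sum_le_sum fun k _ => ?_
          have h := hJ (k:ℤ)
          simp only [hf1]
          push_cast at h ⊢
          exact h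
      _ = ((n:ℝ)/T) * ∑ k ∈ Finset.range n, (f1 (k+1) - f1 k) := by rw [Finset.mul_sum]
      _ = ((n:ℝ)/T) * (f1 n - f1 0) := by rw [Finset.sum_range_sub]
      _ = ((n:ℝ)/T) * (Q ((n:ℝ)*(T/n)) - Q 0) := by norm_num [hf1]
  -- negative-index sum
  have sum2 : ∑ m ∈ Finset.range (n-1), |gam R T n ((m:ℤ)+1-(n:ℤ))|
      ≤ ((n:ℝ)/T) * (Q 0 - Q ((1-(n:ℝ))*(T/n))) := by
    set f2 : ℕ → ℝ := fun i => Q (((i:ℝ)+1-(n:ℝ))*(T/n)) with hf2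
    calc ∑ m ∈ Finset.range (n-1), |gam R T n ((m:ℤ)+1-(n:ℤ))|
        ≤ ∑ m ∈ Finset.range (n-1), ((n:ℝ)/T) * (f2 (m+1) - f2 m) := by
          refine Finset.sum_le_sum fun m _ => ?_
          have h := hJ ((m:ℤ)+1-(n:ℤ))
          simp only [hf2]
          push_cast at h ⊢
          have e1 : ((m:ℝ)+1-(n:ℝ)+1)*(T/n) = ((m:ℝ)+1+1-(n:ℝ))*(T/n) := by ring
          rw [e1] at h
          exact h
      _ = ((n:ℝ)/T) * ∑ m ∈ Finset.range (n-1), (f2 (m+1) - f2 m) := by rw [Finset.mul_sum]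
      _ = ((n:ℝ)/T) * (f2 (n-1) - f2 0) := by rw [Finset.sum_range_sub]
      _ = ((n:ℝ)/T) * (Q 0 - Q ((1-(n:ℝ))*(T/n))) := by
          have hcast : ((n-1:ℕ):ℝ) = (n:ℝ) - 1 := by
            rw [Nat.cast_sub hn]; norm_num
          have e0 : (((n-1:ℕ):ℝ)+1-(n:ℝ))*(T/n) = 0 := by rw [hcast]; ring
          have e2 : (((0:ℕ):ℝ)+1-(n:ℝ))*(T/n) = (1-(n:ℝ))*(T/n) := by norm_num
          simp only [hf2, e0, e2]
  -- combine into the hat sum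
  have hneg : ∀ m : ℕ, gam R T n ((n:ℤ) - ((m:ℤ)+1)) = gam R T n (((m:ℤ)+1) - n) := by
    intro m
    have h := gam_neg hInt hEven T n ((n:ℤ) - ((m:ℤ)+1))
    rw [neg_sub] at h
    exact h.symm
  have hsplit : ∑ k ∈ Finset.range n, |gamHat R T n k|
      ≤ ∑ k ∈ Finset.range n, |gam R T n (k:ℤ)|
        + ∑ m ∈ Finset.range (n-1), |gam R T n ((m:ℤ)+1-(n:ℤ))| := by
    obtain ⟨p, hp⟩ : ∃ p, n = p + 1 := ⟨n - 1, (Nat.succ_pred_eq_of_pos hn).symm⟩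
    rw [hp] at hneg ⊢
    simp only [Nat.add_sub_cancel]
    rw [Finset.sum_range_succ', Finset.sum_range_succ' (fun k => |gam R T (p+1) (k:ℤ)|)]
    have h0 : |gamHat R T (p+1) 0| = |gam R T (p+1) ((0:ℕ):ℤ)| := by
      rw [gamHat, if_pos rfl]; norm_num
    rw [h0]
    have hterm : ∀ m ∈ Finset.range p, |gamHat R T (p+1) (m+1)|
        ≤ |gam R T (p+1) ((m+1:ℕ):ℤ)| + |gam R T (p+1) ((m:ℤ)+1-((p:ℤ)+1))| := by
      intro m _
      rw [gamHat, if_neg (Nat.succ_ne_zero m)]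
      have e : ((((p:ℕ)+1:ℕ):ℤ) - ((m+1:ℕ):ℤ)) = (((p:ℕ)+1:ℕ):ℤ) - ((m:ℤ)+1) := by
        push_cast; ring
      rw [e, hneg m]
      have e2 : (((m:ℤ)+1) - (((p:ℕ)+1:ℕ):ℤ)) = ((m:ℤ)+1-((p:ℤ)+1)) := by push_cast; ring
      rw [e2]
      exact abs_add_le _ _
    have ecast : ∀ m : ℕ, ((m:ℤ)+1-(((p+1:ℕ)):ℤ)) = ((m:ℤ)+1-((p:ℤ)+1)) := by
      intro m; push_cast; ring
    simp only [ecast]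
    calc (∑ m ∈ Finset.range p, |gamHat R T (p+1) (m+1)|) + |gam R T (p+1) ((0:ℕ):ℤ)|
        ≤ (∑ m ∈ Finset.range p,
            (|gam R T (p+1) ((m+1:ℕ):ℤ)| + |gam R T (p+1) ((m:ℤ)+1-((p:ℤ)+1))|))
            + |gam R T (p+1) ((0:ℕ):ℤ)| := by
          exact add_le_add_left (Finset.sum_le_sum hterm) _
      _ = ((∑ m ∈ Finset.range p, |gam R T (p+1) ((m+1:ℕ):ℤ)|) + |gam R T (p+1) ((0:ℕ):ℤ)|)
            + ∑ m ∈ Finset.range p, |gam R T (p+1) ((m:ℤ)+1-((p:ℤ)+1))| := by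
          rw [Finset.sum_add_distrib]; ring
  -- bound the Q-difference by I * (T/n)
  have hQQ : Q ((n:ℝ)*(T/n)) - Q ((1-(n:ℝ))*(T/n)) ≤ I * (T/n) := by
    rw [hQsub]
    have hle : ∀ u ∈ Set.Icc (0:ℝ) (T/n),
        Pabs R ((n:ℝ)*(T/n) - u) - Pabs R ((1-(n:ℝ))*(T/n) - u) ≤ I := by
      intro u _
      refine Pabs_sub_le hInt ?_
      have h1 : (1-(n:ℝ)) ≤ (n:ℝ) := by
        have : (1:ℝ) ≤ n := by exact_mod_cast hn
        linarith
      have := mul_le_mul_of_nonneg_right h1 hc.le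
      linarith
    have hcont2 : Continuous fun u : ℝ =>
        Pabs R ((n:ℝ)*(T/n) - u) - Pabs R ((1-(n:ℝ))*(T/n) - u) := (hQc _).sub (hQc _)
    calc (∫ u in (0:ℝ)..(T/n),
          (Pabs R ((n:ℝ)*(T/n) - u) - Pabs R ((1-(n:ℝ))*(T/n) - u)))
        ≤ ∫ _u in (0:ℝ)..(T/n), I :=
          intervalIntegral.integral_mono_on hc.le (hcont2.intervalIntegrable _ _)
            intervalIntegrable_const hle
      _ = I * (T/n) := by rw [intervalIntegral.integral_const]; simp [mul_comm]
  -- total hat sum bound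
  have hsum : ∑ k : Fin n, |gamHat R T n (k:ℕ)| ≤ I := by
    rw [Fin.sum_univ_eq_sum_range (fun k => |gamHat R T n k|) n]
    calc ∑ k ∈ Finset.range n, |gamHat R T n k|
        ≤ ∑ k ∈ Finset.range n, |gam R T n (k:ℤ)|
          + ∑ m ∈ Finset.range (n-1), |gam R T n ((m:ℤ)+1-(n:ℤ))| := hsplit
      _ ≤ ((n:ℝ)/T) * (Q ((n:ℝ)*(T/n)) - Q 0)
          + ((n:ℝ)/T) * (Q 0 - Q ((1-(n:ℝ))*(T/n))) := add_le_add sum1 sum2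
      _ = ((n:ℝ)/T) * (Q ((n:ℝ)*(T/n)) - Q ((1-(n:ℝ))*(T/n))) := by ring
      _ ≤ ((n:ℝ)/T) * (I * (T/n)) :=
          mul_le_mul_of_nonneg_left hQQ (div_pos hn' hT).le
      _ = I := by field_simp
  -- final assembly
  have hS : S ≤ (2 * (M * T / n)) * I := by
    calc S ≤ ∑ k : Fin n, (2 * (M * T / n)) * |gamHat R T n (k:ℕ)| := by
          refine Finset.sum_le_sum fun k _ => ?_
          have : (gamHat R T n (k:ℕ))^2 = |gamHat R T n (k:ℕ)| * |gamHat R T n (k:ℕ)| := by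
            rw [← sq_abs]; ring
          rw [this]
          exact mul_le_mul_of_nonneg_right (hBpt k) (abs_nonneg _)
      _ = (2 * (M * T / n)) * ∑ k : Fin n, |gamHat R T n (k:ℕ)| := by rw [Finset.mul_sum]
      _ ≤ (2 * (M * T / n)) * I := by
          refine mul_le_mul_of_nonneg_left hsum ?_
          positivity
  calc (∑ i, ∑ j, (AHat R T n i j)^2) / T = ((n:ℝ) * S) / T := by rw [hA]
    _ ≤ ((n:ℝ) * ((2 * (M * T / n)) * I)) / T := by gcongr
    _ = 2 * I * M := by field_simp
end

section
/- Assume in addition that R(τ) → 0 as |τ| → ∞. Let {T_k} be a sequence of positive reals with T_k → ∞ and let {n_k} be positive integers with T_k/n_k → 0. Then lim_{k→∞} (n_k/T_k) · Σ_{l=1}^{n_k−1} γ_l(T_k, n_k) · γ_{n_k−l}(T_k, n_k) = 0. -/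
open MeasureTheory Filter Finset Real

noncomputable def prim (f : ℝ → ℝ) : ℝ → ℝ := fun x => ∫ w in (0:ℝ)..x, f w

lemma prim_cont {f : ℝ → ℝ} (hf : Continuous f) : Continuous (prim f) :=
  intervalIntegral.continuous_primitive (fun a b => hf.intervalIntegrable a b) 0

lemma integral_shift {f : ℝ → ℝ} (hf : Continuous f) (a b u : ℝ) :
    ∫ v in a..b, f (v - u) = prim f (b - u) - prim f (a - u) := by
  rw [intervalIntegral.integral_comp_sub_right]
  exact (intervalIntegral.integral_interval_sub_left (hf.intervalIntegrable _ _)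
    (hf.intervalIntegrable _ _)).symm

lemma prim_sub_eq {f : ℝ → ℝ} (hf : Continuous f) (a b : ℝ) :
    prim f b - prim f a = ∫ w in a..b, f w :=
  intervalIntegral.integral_interval_sub_left (hf.intervalIntegrable _ _)
    (hf.intervalIntegrable _ _)

lemma gam_small (R : ℝ → ℝ) (T : ℝ) (hT : 0 < T) (n : ℕ) (hn : 0 < n)
    (m : ℤ) (hm : (1:ℤ) ≤ m) (ε : ℝ)
    (h : ∀ τ : ℝ, ((m:ℝ) - 1) * T / n ≤ τ → |R τ| ≤ ε) :
    |gam R T n m| ≤ (T / n) * ε := by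
  have hn' : (0:ℝ) < n := by exact_mod_cast hn
  have hδ : (0:ℝ) < T / n := div_pos hT hn'
  have hm' : (1:ℝ) ≤ (m:ℝ) := by exact_mod_cast hm
  have hinner : ∀ u ∈ Set.uIcc (0:ℝ) (T/n),
      ‖∫ v in ((m:ℝ) * T / n)..(((m:ℝ) + 1) * T / n), R (v - u)‖ ≤ ε * (T/n) := by
    intro u hu
    rw [Set.uIcc_of_le hδ.le] at hu
    have hb : (m:ℝ) * T / n ≤ ((m:ℝ) + 1) * T / n := by
      have : (m:ℝ) * T ≤ ((m:ℝ)+1) * T := by nlinarith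
      exact div_le_div_of_nonneg_right this hn'.le
    have := intervalIntegral.norm_integral_le_of_norm_le_const
      (C := ε) (f := fun v => R (v - u)) (a := (m:ℝ) * T / n) (b := ((m:ℝ) + 1) * T / n) ?_
    · calc ‖∫ v in ((m:ℝ) * T / n)..(((m:ℝ) + 1) * T / n), R (v - u)‖
          ≤ ε * |((m:ℝ) + 1) * T / n - (m:ℝ) * T / n| := this
        _ = ε * (T/n) := by
            rw [abs_of_nonneg (by linarith)]
            ring_nf
    · intro v hv
      rw [Set.uIoc_of_le hb] at hv
      rw [Real.norm_eq_abs]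
      apply h
      have h1 : (m:ℝ) * T / n ≤ v := hv.1.le
      have h2 : u ≤ T / n := hu.2
      have : ((m:ℝ) - 1) * T / n = (m:ℝ) * T / n - T / n := by ring
      linarith
  have houter := intervalIntegral.norm_integral_le_of_norm_le_const
    (C := ε * (T/n)) (f := fun u => ∫ v in ((m:ℝ) * T / n)..(((m:ℝ) + 1) * T / n), R (v - u))
    (a := (0:ℝ)) (b := T/n)
    (fun u hu => hinner u (Set.uIoc_subset_uIcc hu))
  unfold gam
  rw [abs_mul, abs_of_nonneg (by positivity : (0:ℝ) ≤ (n:ℝ)/T)]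
  calc (n:ℝ)/T * |∫ u in (0:ℝ)..(T/n), ∫ v in ((m:ℝ) * T / n)..(((m:ℝ) + 1) * T / n), R (v - u)|
      ≤ (n:ℝ)/T * (ε * (T/n) * |T/n - 0|) := by
        apply mul_le_mul_of_nonneg_left _ (by positivity)
        simpa [Real.norm_eq_abs] using houter
    _ = (T/n) * ε := by
        rw [sub_zero, abs_of_nonneg hδ.le]
        field_simp

lemma gam_sum_le (R : ℝ → ℝ) (hCont : Continuous R) (hInt : Integrable R)
    (T : ℝ) (hT : 0 < T) (n : ℕ) (hn : 0 < n) :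
    ∑ l ∈ Finset.Icc 1 (n-1), |gam R T n (l:ℤ)| ≤ ∫ τ, |R τ| := by
  have hn' : (0:ℝ) < n := by exact_mod_cast hn
  have hδ : (0:ℝ) < T / n := div_pos hT hn'
  set C : ℝ := ∫ τ, |R τ| with hC
  have hC0 : 0 ≤ C := integral_nonneg (fun τ => abs_nonneg _)
  have hRa : Continuous (fun w => |R w|) := hCont.abs
  set F : ℝ → ℝ := prim (fun w => |R w|) with hF
  have hFc : Continuous F := prim_cont hRa
  set G : ℕ → ℝ → ℝ := fun l u => F (((l:ℝ) + 1) * T / n - u) - F ((l:ℝ) * T / n - u) with hG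
  have hGc : ∀ l, Continuous (G l) := fun l =>
    (hFc.comp (continuous_const.sub continuous_id)).sub
      (hFc.comp (continuous_const.sub continuous_id))
  have hintC : ∀ a b : ℝ, a ≤ b → (∫ w in a..b, |R w|) ≤ C := by
    intro a b hab
    rw [intervalIntegral.integral_of_le hab]
    exact setIntegral_le_integral hInt.abs (Eventually.of_forall fun τ => abs_nonneg _)
  have hGeq : ∀ l : ℕ, ∀ u : ℝ, G l u = ∫ w in ((l:ℝ) * T / n - u)..(((l:ℝ)+1) * T / n - u), |R w| := by
    intro l u
    exact (prim_sub_eq hRa _ _)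
  have perl : ∀ l ∈ Finset.Icc 1 (n-1),
      |gam R T n (l:ℤ)| ≤ ((n:ℝ)/T) * ∫ u in (0:ℝ)..(T/n), G l u := by
    intro l hl
    have hab : (l:ℝ) * T / n ≤ ((l:ℝ)+1) * T / n := by
      have : (l:ℝ) * T ≤ ((l:ℝ)+1) * T := by nlinarith
      exact div_le_div_of_nonneg_right this hn'.le
    have habs : ∀ u : ℝ, |∫ v in ((l:ℝ) * T / n)..(((l:ℝ)+1) * T / n), R (v - u)| ≤ G l u := by
      intro u
      calc |∫ v in ((l:ℝ) * T / n)..(((l:ℝ)+1) * T / n), R (v - u)|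
          ≤ ∫ v in ((l:ℝ) * T / n)..(((l:ℝ)+1) * T / n), |R (v - u)| :=
            intervalIntegral.abs_integral_le_integral_abs hab
        _ = G l u := integral_shift hRa _ _ u
    have hinnercont : Continuous (fun u => ∫ v in ((l:ℝ) * T / n)..(((l:ℝ)+1) * T / n), R (v - u)) := by
      have : (fun u => ∫ v in ((l:ℝ) * T / n)..(((l:ℝ)+1) * T / n), R (v - u))
          = fun u => prim R (((l:ℝ)+1) * T / n - u) - prim R ((l:ℝ) * T / n - u) :=
        funext fun u => integral_shift hCont _ _ u
      rw [this]
      exact ((prim_cont hCont).comp (continuous_const.sub continuous_id)).sub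
        ((prim_cont hCont).comp (continuous_const.sub continuous_id))
    have key : |∫ u in (0:ℝ)..(T/n), ∫ v in ((l:ℝ) * T / n)..(((l:ℝ)+1) * T / n), R (v - u)|
        ≤ ∫ u in (0:ℝ)..(T/n), G l u := by
      calc |∫ u in (0:ℝ)..(T/n), ∫ v in ((l:ℝ) * T / n)..(((l:ℝ)+1) * T / n), R (v - u)|
          ≤ ∫ u in (0:ℝ)..(T/n), |∫ v in ((l:ℝ) * T / n)..(((l:ℝ)+1) * T / n), R (v - u)| :=
            intervalIntegral.abs_integral_le_integral_abs hδ.le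
        _ ≤ ∫ u in (0:ℝ)..(T/n), G l u := by
            apply intervalIntegral.integral_mono_on hδ.le
              (hinnercont.abs.intervalIntegrable _ _) ((hGc l).intervalIntegrable _ _)
            intro u _
            exact habs u
    show |gam R T n (l:ℤ)| ≤ _
    unfold gam
    rw [abs_mul, abs_of_nonneg (by positivity : (0:ℝ) ≤ (n:ℝ)/T)]
    apply mul_le_mul_of_nonneg_left _ (by positivity)
    push_cast
    exact key
  have tel : ∀ u : ℝ, ∑ l ∈ Finset.Icc 1 (n-1), G l u
      = F ((n:ℝ) * T / n - u) - F (1 * T / n - u) := by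
    intro u
    rw [show Finset.Icc 1 (n-1) = Finset.Ico 1 n by
      rw [← Finset.Ico_add_one_right_eq_Icc]; congr 1; omega]
    rw [Finset.sum_Ico_eq_sum_range]
    have h2 : ∀ i ∈ Finset.range (n-1), G (1 + i) u
        = (fun i : ℕ => F (((i:ℝ) + 1) * T / n - u)) (i+1)
          - (fun i : ℕ => F (((i:ℝ) + 1) * T / n - u)) i := by
      intro i _
      simp only [hG]
      push_cast
      ring_nf
    rw [Finset.sum_congr rfl h2]
    have h4 : ∑ x ∈ Finset.range (n-1),
        ((fun i : ℕ => F (((i:ℝ) + 1) * T / n - u)) (x+1)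
          - (fun i : ℕ => F (((i:ℝ) + 1) * T / n - u)) x)
        = (fun i : ℕ => F (((i:ℝ) + 1) * T / n - u)) (n-1)
          - (fun i : ℕ => F (((i:ℝ) + 1) * T / n - u)) 0 :=
      Finset.sum_range_sub (fun i : ℕ => F (((i:ℝ) + 1) * T / n - u)) (n-1)
    rw [h4]
    have h3 : ((n - 1 : ℕ) : ℝ) + 1 = (n : ℝ) := by
      have h : (1:ℕ) ≤ n := hn
      push_cast [h]
      ring
    simp only []
    rw [h3]
    norm_num
  calc ∑ l ∈ Finset.Icc 1 (n-1), |gam R T n (l:ℤ)|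
      ≤ ∑ l ∈ Finset.Icc 1 (n-1), ((n:ℝ)/T) * ∫ u in (0:ℝ)..(T/n), G l u :=
        Finset.sum_le_sum perl
    _ = ((n:ℝ)/T) * ∑ l ∈ Finset.Icc 1 (n-1), ∫ u in (0:ℝ)..(T/n), G l u := by
        rw [Finset.mul_sum]
    _ = ((n:ℝ)/T) * ∫ u in (0:ℝ)..(T/n), ∑ l ∈ Finset.Icc 1 (n-1), G l u := by
        rw [intervalIntegral.integral_finset_sum]
        intro l _
        exact (hGc l).intervalIntegrable _ _
    _ = ((n:ℝ)/T) * ∫ u in (0:ℝ)..(T/n), (F ((n:ℝ) * T / n - u) - F (1 * T / n - u)) := by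
        congr 1
        exact intervalIntegral.integral_congr (fun u _ => tel u)
    _ ≤ ((n:ℝ)/T) * ((T/n) * C) := by
        apply mul_le_mul_of_nonneg_left _ (by positivity)
        have hle : ∀ u ∈ Set.Icc (0:ℝ) (T/n), F ((n:ℝ) * T / n - u) - F (1 * T / n - u) ≤ C := by
          intro u _
          have hab : 1 * T / n - u ≤ (n:ℝ) * T / n - u := by
            have : (1:ℝ) * T ≤ (n:ℝ) * T := by
              have : (1:ℝ) ≤ (n:ℝ) := by exact_mod_cast hn
              nlinarith
            have := div_le_div_of_nonneg_right this hn'.le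
            linarith
          rw [show F ((n:ℝ) * T / n - u) - F (1 * T / n - u)
              = ∫ w in (1 * T / n - u)..((n:ℝ) * T / n - u), |R w| from prim_sub_eq hRa _ _]
          exact hintC _ _ hab
        calc (∫ u in (0:ℝ)..(T/n), (F ((n:ℝ) * T / n - u) - F (1 * T / n - u)))
            ≤ ∫ u in (0:ℝ)..(T/n), C := by
              apply intervalIntegral.integral_mono_on hδ.le _ (intervalIntegrable_const) hle
              exact ((hFc.comp (continuous_const.sub continuous_id)).sub
                (hFc.comp (continuous_const.sub continuous_id))).intervalIntegrable _ _
          _ = (T/n) * C := by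
              rw [intervalIntegral.integral_const, smul_eq_mul, sub_zero]
    _ = C := by field_simp

lemma gam_sum_reflect (R : ℝ → ℝ) (T : ℝ) (n : ℕ) :
    ∑ l ∈ Finset.Icc 1 (n-1), |gam R T n ((n:ℤ) - l)|
      = ∑ l ∈ Finset.Icc 1 (n-1), |gam R T n (l:ℤ)| := by
  apply Finset.sum_nbij' (i := fun l => n - l) (j := fun l => n - l)
  · intro a ha
    rw [Finset.mem_Icc] at *
    omega
  · intro a ha
    rw [Finset.mem_Icc] at *
    omega
  · intro a ha
    rw [Finset.mem_Icc] at ha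
    omega
  · intro a ha
    rw [Finset.mem_Icc] at ha
    omega
  · intro a ha
    rw [Finset.mem_Icc] at ha
    congr 1
    have : ((n - a : ℕ) : ℤ) = (n:ℤ) - a := by
      have : a ≤ n := by omega
      push_cast [this]
      ring
    rw [this]

theorem stmt_15 (R : ℝ → ℝ) (hEven : ∀ τ, R (-τ) = R τ) (hCont : Continuous R)
    (hBdd : ∃ M, ∀ τ, |R τ| ≤ M) (hInt : Integrable R)
    (hvanish : Tendsto R (cocompact ℝ) (nhds 0))
    (T : ℕ → ℝ) (hTpos : ∀ k, 0 < T k) (hTlim : Tendsto T atTop atTop)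
    (n : ℕ → ℕ) (hnpos : ∀ k, 0 < n k)
    (hratio : Tendsto (fun k => T k / (n k : ℝ)) atTop (nhds 0)) :
    Tendsto (fun k => ((n k : ℝ) / T k) *
        ∑ l ∈ Finset.Icc 1 (n k - 1), gam R (T k) (n k) l * gam R (T k) (n k) ((n k : ℤ) - l))
      atTop (nhds 0) := by
  rw [NormedAddCommGroup.tendsto_nhds_zero]
  intro ε hε
  set C : ℝ := ∫ τ, |R τ| with hCdef
  have hC0 : 0 ≤ C := integral_nonneg (fun τ => abs_nonneg _)
  set ε' : ℝ := ε / (2*C + 2) with hε'def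
  have hε' : 0 < ε' := div_pos hε (by linarith)
  have key : 2*C*ε' < ε := by
    have h1 : 2*C*ε' = (2*C)*ε/(2*C+2) := by rw [hε'def]; ring
    rw [h1, div_lt_iff₀ (by linarith)]
    nlinarith
  -- tail bound on R
  have hRtop : Tendsto R atTop (nhds 0) := by
    rw [cocompact_eq_atBot_atTop] at hvanish
    exact hvanish.mono_left le_sup_right
  obtain ⟨A, hA⟩ : ∃ A : ℝ, ∀ τ : ℝ, A ≤ τ → |R τ| ≤ ε' := by
    have h := Metric.tendsto_nhds.mp hRtop ε' hε'
    rw [eventually_atTop] at h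
    obtain ⟨A, hA⟩ := h
    refine ⟨A, fun τ hτ => ?_⟩
    have := hA τ hτ
    rw [Real.dist_eq, sub_zero] at this
    exact this.le
  have hev1 : ∀ᶠ k in atTop, 2*A + 2 ≤ T k := hTlim.eventually_ge_atTop _
  have hev2 : ∀ᶠ k in atTop, T k / (n k : ℝ) ≤ 1 := by
    have h := Metric.tendsto_nhds.mp hratio 1 one_pos
    filter_upwards [h] with k hk
    rw [Real.dist_eq, sub_zero] at hk
    exact (le_abs_self _).trans hk.le
  filter_upwards [hev1, hev2] with k hk1 hk2
  set t := T k with htdef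
  set m := n k with hmdef
  have ht : 0 < t := hTpos k
  have hm : 0 < m := hnpos k
  have hm' : (0:ℝ) < m := by exact_mod_cast hm
  have hδ : (0:ℝ) < t / m := div_pos ht hm'
  have hthr : A ≤ t/2 - t/m := by
    have : t / m ≤ 1 := hk2
    linarith
  -- per-term bound
  have perterm : ∀ l ∈ Finset.Icc 1 (m-1),
      |gam R t m (l:ℤ) * gam R t m ((m:ℤ) - l)|
        ≤ (t/m)*ε' * (|gam R t m (l:ℤ)| + |gam R t m ((m:ℤ) - l)|) := by
    intro l hl
    rw [Finset.mem_Icc] at hl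
    obtain ⟨hl1, hl2⟩ := hl
    have hl1' : (1:ℝ) ≤ (l:ℝ) := by exact_mod_cast hl1
    have hlm : (l:ℝ) ≤ (m:ℝ) - 1 := by
      have : (l:ℝ) ≤ ((m-1 : ℕ):ℝ) := by exact_mod_cast hl2
      have h : (1:ℕ) ≤ m := hm
      push_cast [h] at this
      linarith
    rw [abs_mul]
    by_cases hc : m ≤ 2*l
    · -- |γ_l| small
      have hsm : |gam R t m (l:ℤ)| ≤ (t/m) * ε' := by
        apply gam_small R t ht m hm (l:ℤ) (by exact_mod_cast hl1)
        intro τ hτ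
        apply hA
        have hcast : (((l:ℤ)):ℝ) = (l:ℝ) := by push_cast; ring
        rw [hcast] at hτ
        have hl2' : (m:ℝ)/2 ≤ (l:ℝ) := by
          have : (m:ℝ) ≤ 2*(l:ℝ) := by exact_mod_cast hc
          linarith
        have h1 : ((m:ℝ)/2 - 1) * (t/m) ≤ ((l:ℝ) - 1) * (t/m) := by
          apply mul_le_mul_of_nonneg_right _ hδ.le
          linarith
        have h2 : ((m:ℝ)/2 - 1) * (t/m) = t/2 - t/m := by
          field_simp
        have h3 : ((l:ℝ) - 1) * t / m = ((l:ℝ) - 1) * (t/m) := by ring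
        rw [h3] at hτ
        linarith
      calc |gam R t m (l:ℤ)| * |gam R t m ((m:ℤ) - l)|
          ≤ (t/m)*ε' * |gam R t m ((m:ℤ) - l)| :=
            mul_le_mul_of_nonneg_right hsm (abs_nonneg _)
        _ ≤ (t/m)*ε' * (|gam R t m (l:ℤ)| + |gam R t m ((m:ℤ) - l)|) := by
            apply mul_le_mul_of_nonneg_left _ (by positivity)
            have := abs_nonneg (gam R t m (l:ℤ))
            linarith
    · -- |γ_{m-l}| small
      push_neg at hc
      have hsm : |gam R t m ((m:ℤ) - l)| ≤ (t/m) * ε' := by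
        apply gam_small R t ht m hm ((m:ℤ) - l)
        · have : (l:ℤ) ≤ (m:ℤ) - 1 := by
            have : (l:ℤ) ≤ ((m-1:ℕ):ℤ) := by exact_mod_cast hl2
            omega
          omega
        intro τ hτ
        apply hA
        have hcast : (((m:ℤ) - l : ℤ):ℝ) = (m:ℝ) - (l:ℝ) := by push_cast; ring
        rw [hcast] at hτ
        have hl2' : (l:ℝ) ≤ (m:ℝ)/2 := by
          have : 2*(l:ℝ) ≤ (m:ℝ) := by exact_mod_cast hc.le
          linarith
        have h1 : ((m:ℝ)/2 - 1) * (t/m) ≤ ((m:ℝ) - (l:ℝ) - 1) * (t/m) := by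
          apply mul_le_mul_of_nonneg_right _ hδ.le
          linarith
        have h2 : ((m:ℝ)/2 - 1) * (t/m) = t/2 - t/m := by
          field_simp
        have h3 : ((m:ℝ) - (l:ℝ) - 1) * t / m = ((m:ℝ) - (l:ℝ) - 1) * (t/m) := by ring
        rw [h3] at hτ
        linarith
      calc |gam R t m (l:ℤ)| * |gam R t m ((m:ℤ) - l)|
          ≤ |gam R t m (l:ℤ)| * ((t/m)*ε') :=
            mul_le_mul_of_nonneg_left hsm (abs_nonneg _)
        _ ≤ (t/m)*ε' * (|gam R t m (l:ℤ)| + |gam R t m ((m:ℤ) - l)|) := by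
            have := abs_nonneg (gam R t m ((m:ℤ) - l))
            have h0 : (0:ℝ) ≤ (t/m)*ε' := by positivity
            nlinarith [abs_nonneg (gam R t m (l:ℤ))]
  have hsum : ∑ l ∈ Finset.Icc 1 (m-1), |gam R t m (l:ℤ) * gam R t m ((m:ℤ) - l)|
      ≤ (t/m)*ε' * (2*C) := by
    calc ∑ l ∈ Finset.Icc 1 (m-1), |gam R t m (l:ℤ) * gam R t m ((m:ℤ) - l)|
        ≤ ∑ l ∈ Finset.Icc 1 (m-1),
            (t/m)*ε' * (|gam R t m (l:ℤ)| + |gam R t m ((m:ℤ) - l)|) :=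
          Finset.sum_le_sum perterm
      _ = (t/m)*ε' * (∑ l ∈ Finset.Icc 1 (m-1), |gam R t m (l:ℤ)|
            + ∑ l ∈ Finset.Icc 1 (m-1), |gam R t m ((m:ℤ) - l)|) := by
          rw [← Finset.mul_sum, Finset.sum_add_distrib]
      _ = (t/m)*ε' * (∑ l ∈ Finset.Icc 1 (m-1), |gam R t m (l:ℤ)|
            + ∑ l ∈ Finset.Icc 1 (m-1), |gam R t m (l:ℤ)|) := by
          rw [gam_sum_reflect]
      _ ≤ (t/m)*ε' * (C + C) := by
          apply mul_le_mul_of_nonneg_left _ (by positivity)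
          have := gam_sum_le R hCont hInt t ht m hm
          rw [← hCdef] at this
          linarith
      _ = (t/m)*ε' * (2*C) := by ring
  rw [Real.norm_eq_abs]
  calc |((m:ℝ)/t) * ∑ l ∈ Finset.Icc 1 (m-1), gam R t m (l:ℤ) * gam R t m ((m:ℤ) - l)|
      = ((m:ℝ)/t) * |∑ l ∈ Finset.Icc 1 (m-1), gam R t m (l:ℤ) * gam R t m ((m:ℤ) - l)| := by
        rw [abs_mul, abs_of_nonneg (by positivity : (0:ℝ) ≤ (m:ℝ)/t)]
    _ ≤ ((m:ℝ)/t) * ∑ l ∈ Finset.Icc 1 (m-1), |gam R t m (l:ℤ) * gam R t m ((m:ℤ) - l)| := by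
        apply mul_le_mul_of_nonneg_left (Finset.abs_sum_le_sum_abs _ _) (by positivity)
    _ ≤ ((m:ℝ)/t) * ((t/m)*ε' * (2*C)) :=
        mul_le_mul_of_nonneg_left hsum (by positivity)
    _ = 2*C*ε' := by field_simp
    _ < ε := key
end
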